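/- arXiv:0907.3262 — 6 statements merged into one kernel-verified Lean document; each statement's English description precedes it below -/
import Mathlib

section
/- Let a > 3/2 and let (q°_k)_{k≥1} be a sequence of nonnegative real numbers such that k^a · q°_k → 1 as k → ∞. Set c = 4/(4·f∘(1/4) + f∘'(1/4)) and β = f∘'(1/4)/(4·f∘(1/4) + f∘'(1/4)), and define q_k = c·(β/4)^{k−1}·q°_k for every k ≥ 1 and f_q(x) = ∑_{k≥1} N(k)·q_k·x^{k−1}. Then: (i) β ∈ (0,1); (ii) the radius of convergence of the power series f_q equals 1/β; (iii) f_q(1/β) = 1 − β; (iv) f_q'(1/β) = β²; and (v) x = 1/β is the unique real number x ≥ 1 such that the series defining f_q(x) converges and f_q(x) = 1 − 1/x. -/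
open Filter

lemma cb_le (n : ℕ) : (Nat.centralBinom n : ℝ) * Real.sqrt (n + 1) ≤ 4 ^ n := by
  induction n with
  | zero => simp [Nat.centralBinom_zero]
  | succ n ih =>
    have hid : ((n : ℝ) + 1) * (Nat.centralBinom (n + 1) : ℝ)
        = 2 * (2 * n + 1) * (Nat.centralBinom n : ℝ) := by
      have := Nat.succ_mul_centralBinom_succ n
      exact_mod_cast congrArg (fun m : ℕ => (m : ℝ)) this
    set s1 := Real.sqrt (n + 1) with hs1
    set s2 := Real.sqrt (n + 2) with hs2
    have hs1nn : 0 ≤ s1 := Real.sqrt_nonneg _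
    have hs2nn : 0 ≤ s2 := Real.sqrt_nonneg _
    have hs1pos : 1 ≤ s1 := by
      rw [hs1]
      nlinarith [Real.sq_sqrt (by positivity : (0:ℝ) ≤ (n:ℝ) + 1), Real.sqrt_nonneg ((n:ℝ)+1)]
    have key : 2 * (2 * (n : ℝ) + 1) * s2 ≤ 4 * ((n : ℝ) + 1) * s1 := by
      have h1 : s2 ^ 2 = (n : ℝ) + 2 := Real.sq_sqrt (by positivity)
      have h2 : s1 ^ 2 = (n : ℝ) + 1 := Real.sq_sqrt (by positivity)
      nlinarith [hs1nn, hs2nn, sq_nonneg (2 * (2 * (n:ℝ) + 1) * s2 - 4 * ((n:ℝ) + 1) * s1),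
        sq_nonneg (s1 - s2), sq_nonneg (s1 + s2)]
    have hCnn : (0:ℝ) ≤ (Nat.centralBinom n : ℝ) := by positivity
    have h1 : (Nat.centralBinom (n+1) : ℝ) * s2 * ((n:ℝ) + 1)
        = (Nat.centralBinom n : ℝ) * (2 * (2 * (n:ℝ) + 1) * s2) := by
      push_cast at hid ⊢; nlinarith [hid]
    have h2 : (Nat.centralBinom n : ℝ) * (2 * (2 * (n:ℝ) + 1) * s2)
        ≤ ((Nat.centralBinom n : ℝ) * s1) * (4 * ((n:ℝ) + 1)) := by
      calc (Nat.centralBinom n : ℝ) * (2 * (2 * (n:ℝ) + 1) * s2)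
          ≤ (Nat.centralBinom n : ℝ) * (4 * ((n:ℝ) + 1) * s1) :=
            mul_le_mul_of_nonneg_left key hCnn
        _ = ((Nat.centralBinom n : ℝ) * s1) * (4 * ((n:ℝ) + 1)) := by ring
    have h4 : ((Nat.centralBinom n : ℝ) * s1) * (4 * ((n:ℝ) + 1))
        ≤ 4 ^ n * (4 * ((n:ℝ) + 1)) :=
      mul_le_mul_of_nonneg_right ih (by positivity)
    have h5 : (Nat.centralBinom (n+1) : ℝ) * s2 * ((n:ℝ) + 1) ≤ 4 ^ (n+1) * ((n:ℝ)+1) := by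
      rw [h1]
      calc _ ≤ _ := h2
        _ ≤ 4 ^ n * (4 * ((n:ℝ) + 1)) := h4
        _ = 4 ^ (n+1) * ((n:ℝ)+1) := by ring
    have : (0:ℝ) < (n:ℝ) + 1 := by positivity
    have := (mul_le_mul_iff_of_pos_right this).1 h5
    convert this using 2
    case e'_2 => rfl
    rw [hs2]; congr 1; push_cast; ring

lemma pow_sub_pow_le (x y : ℝ) (h0 : 0 ≤ x) (hxy : x ≤ y) (k : ℕ) :
    y ^ k - x ^ k ≤ (k : ℝ) * y ^ (k - 1) * (y - x) := by
  induction k with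
  | zero => simp
  | succ k ih =>
    have hy : 0 ≤ y := le_trans h0 hxy
    have hxk : x ^ k ≤ y ^ k := pow_le_pow_left₀ h0 hxy k
    have hyk1 : y ^ k = y * y ^ (k-1) ∨ k = 0 := by
      rcases Nat.eq_zero_or_pos k with h | h
      · right; exact h
      · left; rw [← pow_succ']; congr 1; omega
    rcases hyk1 with h | h
    · have : y ^ (k+1) - x ^ (k+1) = y * (y ^ k - x ^ k) + x ^ k * (y - x) := by ring
      rw [this]
      have h1 : y * (y ^ k - x ^ k) ≤ y * ((k : ℝ) * y ^ (k-1) * (y - x)) :=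
        mul_le_mul_of_nonneg_left ih hy
      have h2 : x ^ k * (y - x) ≤ y ^ k * (y - x) :=
        mul_le_mul_of_nonneg_right hxk (by linarith)
      have : y * ((k : ℝ) * y ^ (k-1) * (y-x)) = (k:ℝ) * y ^ k * (y-x) := by
        rw [h]; ring
      simp only [Nat.add_sub_cancel]
      push_cast
      nlinarith [ih, hxk, hy]
    · subst h; simp

lemma two_mul_choose (k : ℕ) : 2 * (2 * k + 1).choose k = Nat.centralBinom (k + 1) := by
  have h1 : Nat.centralBinom (k + 1) = (2 * k + 2).choose (k + 1) := by
    rw [Nat.centralBinom, show 2*(k+1) = 2*k+2 from by ring]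
  have h2 : (2 * k + 2).choose (k + 1) = (2 * k + 1).choose k + (2 * k + 1).choose (k + 1) :=
    Nat.choose_succ_succ (2 * k + 1) k
  have h3 : (2 * k + 1).choose (k + 1) = (2 * k + 1).choose k := by
    have := Nat.choose_symm (show k + 1 ≤ 2 * k + 1 by omega) (n := 2 * k + 1)
    have e : 2 * k + 1 - (k + 1) = k := by omega
    rw [e] at this
    exact this.symm
  omega

lemma Nub (k : ℕ) : ((2 * k + 1).choose k : ℝ) * Real.sqrt (k + 2) ≤ 2 * 4 ^ k := by
  have := cb_le (k + 1)
  rw [← two_mul_choose k] at this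
  push_cast at this
  have e : ((k : ℝ) + 1 + 1) = (k : ℝ) + 2 := by ring
  rw [e, pow_succ] at this
  linarith

lemma Nlb (k : ℕ) : (4 : ℝ) ^ k ≤ ((k : ℝ) + 1) * ((2 * k + 1).choose k : ℝ) := by
  have h := Nat.four_pow_le_two_mul_self_mul_centralBinom (k + 1) (Nat.succ_pos k)
  rw [← two_mul_choose k] at h
  have : (4:ℝ) ^ (k+1) ≤ 2 * ((k:ℝ) + 1) * (2 * ((2*k+1).choose k : ℝ)) := by
    exact_mod_cast h
  rw [pow_succ] at this
  linarith

lemma master_summable (a : ℝ) (ha : 3 / 2 < a) (q₀ : ℕ → ℝ)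
    (hnn : ∀ k : ℕ, 0 ≤ q₀ (k + 1))
    (hub : ∀ᶠ k : ℕ in atTop, q₀ (k + 1) ≤ 2 * ((k : ℝ) + 1) ^ (-a)) :
    Summable (fun k : ℕ => ((k : ℝ) + 1) * ((2 * k + 1).choose k : ℝ) * q₀ (k + 1) * (1/4) ^ k) := by
  have hsum : Summable (fun k : ℕ => 8 * ((k : ℝ) + 1) ^ (1/2 - a)) := by
    apply Summable.mul_left
    have : Summable (fun n : ℕ => (n : ℝ) ^ (1/2 - a)) :=
      Real.summable_nat_rpow.2 (by linarith)
    have := (summable_nat_add_iff 1).2 this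
    convert this using 2 with k
    · push_cast; rfl
    · push_cast; rfl
  apply hsum.of_norm_bounded_eventually_nat
  filter_upwards [hub] with k hk
  have hN : (0:ℝ) ≤ ((2 * k + 1).choose k : ℝ) := by positivity
  have hterm : (0:ℝ) ≤ ((k : ℝ) + 1) * ((2 * k + 1).choose k : ℝ) * q₀ (k + 1) * (1/4) ^ k := by
    have := hnn k; positivity
  rw [Real.norm_eq_abs, abs_of_nonneg hterm]
  have hk1 : (0:ℝ) < (k:ℝ) + 1 := by positivity
  have hN2 : ((2 * k + 1).choose k : ℝ) ≤ 2 * 4 ^ k / Real.sqrt ((k:ℝ) + 1) := by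
    have h1 := Nub k
    have hs12 : Real.sqrt ((k:ℝ) + 1) ≤ Real.sqrt ((k:ℝ) + 2) := by
      apply Real.sqrt_le_sqrt; linarith
    have hspos : (0:ℝ) < Real.sqrt ((k:ℝ) + 1) := Real.sqrt_pos.2 hk1
    rw [le_div_iff₀ hspos]
    calc ((2 * k + 1).choose k : ℝ) * Real.sqrt ((k:ℝ) + 1)
        ≤ ((2 * k + 1).choose k : ℝ) * Real.sqrt ((k:ℝ) + 2) :=
          mul_le_mul_of_nonneg_left hs12 hN
      _ ≤ 2 * 4 ^ k := by
          have : ((k:ℝ) + 2) = ((k:ℕ):ℝ) + 2 := by norm_num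
          exact_mod_cast Nub k
  have hsq : Real.sqrt ((k:ℝ)+1) = ((k:ℝ)+1) ^ ((1:ℝ)/2) := Real.sqrt_eq_rpow _
  calc ((k : ℝ) + 1) * ((2 * k + 1).choose k : ℝ) * q₀ (k + 1) * (1/4) ^ k
      ≤ ((k : ℝ) + 1) * (2 * 4 ^ k / Real.sqrt ((k:ℝ) + 1)) * (2 * ((k:ℝ)+1) ^ (-a)) * (1/4) ^ k := by
        apply mul_le_mul_of_nonneg_right _ (by positivity)
        apply mul_le_mul (mul_le_mul_of_nonneg_left hN2 (le_of_lt hk1)) hk (hnn k)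
        positivity
    _ = 4 * (((k:ℝ)+1) / Real.sqrt ((k:ℝ)+1)) * ((k:ℝ)+1) ^ (-a) * (4 ^ k * (1/4)^k) := by ring
    _ = 4 * Real.sqrt ((k:ℝ)+1) * ((k:ℝ)+1) ^ (-a) * 1 := by
        rw [Real.div_sqrt, ← mul_pow]; norm_num
    _ ≤ 8 * ((k : ℝ) + 1) ^ (1/2 - a) := by
        rw [mul_one, hsq, mul_assoc, ← Real.rpow_add hk1]
        have : ((1:ℝ)/2 + -a) = 1/2 - a := by ring
        rw [this]
        have : (0:ℝ) ≤ ((k:ℝ)+1) ^ ((1:ℝ)/2 - a) := Real.rpow_nonneg (le_of_lt hk1) _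
        nlinarith [this]
set_option maxHeartbeats 1000000 in
/-- Let `a > 3/2`, let `q°_k ~ k^{-a}` be nonnegative, let
`A = f∘(1/4)`, `B = f∘'(1/4)`, `c = 4/(4A + B)`, `β = B/(4A + B)` and
`q_k = c·(β/4)^{k-1}·q°_k`. Then (i) `β ∈ (0,1)`; (ii) the power series
`f_q(x) = ∑_{k ≥ 1} N(k)·q_k·x^{k-1}` has radius of convergence `1/β`;
(iii) `f_q(1/β) = 1 - β`; (iv) `f_q'(1/β) = β²`; (v) `x = 1/β` is the unique real
`x ≥ 1` at which the series converges and `f_q(x) = 1 - 1/x`.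
(Series over `k ≥ 1` are reindexed by `k + 1`, `k ≥ 0`.) -/
theorem stmt_0
    (a : ℝ) (ha : 3 / 2 < a)
    (q₀ : ℕ → ℝ) (hq₀ : ∀ k : ℕ, 1 ≤ k → 0 ≤ q₀ k)
    (hasymp : Tendsto (fun k : ℕ => (k : ℝ) ^ a * q₀ k) atTop (nhds 1))
    (N : ℕ → ℕ) (hN : ∀ k : ℕ, N k = (2 * k - 1).choose (k - 1))
    (A B : ℝ)
    (hA : A = ∑' k : ℕ, (N (k + 1) : ℝ) * q₀ (k + 1) * (1 / 4 : ℝ) ^ k)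
    (hB : B = ∑' k : ℕ, (k : ℝ) * (N (k + 1) : ℝ) * q₀ (k + 1) * (1 / 4 : ℝ) ^ (k - 1))
    (c β : ℝ) (hc : c = 4 / (4 * A + B)) (hβ : β = B / (4 * A + B))
    (q : ℕ → ℝ) (hq : ∀ k : ℕ, 1 ≤ k → q k = c * (β / 4) ^ (k - 1) * q₀ k) :
    (0 < β ∧ β < 1) ∧
    (∀ x : ℝ, |x| < 1 / β →
      Summable (fun k : ℕ => (N (k + 1) : ℝ) * q (k + 1) * x ^ k)) ∧
    (∀ x : ℝ, 1 / β < |x| →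
      ¬ Summable (fun k : ℕ => (N (k + 1) : ℝ) * q (k + 1) * x ^ k)) ∧
    (∑' k : ℕ, (N (k + 1) : ℝ) * q (k + 1) * (1 / β) ^ k) = 1 - β ∧
    (∑' k : ℕ, (k : ℝ) * (N (k + 1) : ℝ) * q (k + 1) * (1 / β) ^ (k - 1)) = β ^ 2 ∧
    (∀ x : ℝ, 1 ≤ x →
      ((Summable (fun k : ℕ => (N (k + 1) : ℝ) * q (k + 1) * x ^ k) ∧
          (∑' k : ℕ, (N (k + 1) : ℝ) * q (k + 1) * x ^ k) = 1 - 1 / x) ↔ x = 1 / β)) := by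
  -- basic facts about N
  have hNk : ∀ k : ℕ, N (k + 1) = (2 * k + 1).choose k := by
    intro k; rw [hN]; congr 1 <;> omega
  have hNpos : ∀ k : ℕ, 0 < N (k + 1) := by
    intro k; rw [hNk]; exact Nat.choose_pos (by omega)
  have hNnn : ∀ k : ℕ, (0:ℝ) ≤ (N (k + 1) : ℝ) := fun k => by positivity
  have hq₀nn : ∀ k : ℕ, 0 ≤ q₀ (k + 1) := fun k => hq₀ (k + 1) (by omega)
  -- eventual bounds on q₀
  have h12 : ∀ᶠ k : ℕ in atTop, (1/2 : ℝ) ≤ (k:ℝ)^a * q₀ k :=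
    hasymp.eventually (eventually_ge_nhds (by norm_num))
  have h22 : ∀ᶠ k : ℕ in atTop, (k:ℝ)^a * q₀ k ≤ 2 :=
    hasymp.eventually (eventually_le_nhds (by norm_num))
  obtain ⟨n₀, hn₀⟩ := eventually_atTop.1 (h12.and h22)
  have hub : ∀ᶠ k : ℕ in atTop, q₀ (k+1) ≤ 2 * ((k:ℝ)+1)^(-a) := by
    rw [eventually_atTop]
    refine ⟨n₀, fun k hk => ?_⟩
    obtain ⟨_, h2⟩ := hn₀ (k+1) (by omega)
    have hc1 : ((k+1 : ℕ):ℝ) = (k:ℝ)+1 := by push_cast; ring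
    rw [hc1] at h2
    have hpow : (0:ℝ) < ((k:ℝ)+1)^a := Real.rpow_pos_of_pos (by positivity) a
    rw [Real.rpow_neg (by positivity), mul_comm (2:ℝ), ← div_eq_inv_mul]
    rw [le_div_iff₀ hpow]
    nlinarith [h2]
  have hlb : ∀ᶠ k : ℕ in atTop, (1/2) * ((k:ℝ)+1)^(-a) ≤ q₀ (k+1) := by
    rw [eventually_atTop]
    refine ⟨n₀, fun k hk => ?_⟩
    obtain ⟨h1, _⟩ := hn₀ (k+1) (by omega)
    have hc1 : ((k+1 : ℕ):ℝ) = (k:ℝ)+1 := by push_cast; ring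
    rw [hc1] at h1
    have hpow : (0:ℝ) < ((k:ℝ)+1)^a := Real.rpow_pos_of_pos (by positivity) a
    rw [Real.rpow_neg (by positivity), mul_comm ((1:ℝ)/2), ← div_eq_inv_mul]
    rw [div_le_iff₀ hpow]
    nlinarith [h1]
  -- summability of the master series
  have hSg : Summable (fun k : ℕ => ((k:ℝ)+1) * (N (k+1) : ℝ) * q₀ (k+1) * (1/4:ℝ)^k) := by
    have := master_summable a ha q₀ hq₀nn hub
    apply this.congr
    intro k
    rw [hNk k]
  have hgnn : ∀ k : ℕ, (0:ℝ) ≤ ((k:ℝ)+1) * (N (k+1) : ℝ) * q₀ (k+1) * (1/4:ℝ)^k := by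
    intro k
    have := hq₀nn k; have := hNnn k; positivity
  have hSA : Summable (fun k : ℕ => (N (k+1) : ℝ) * q₀ (k+1) * (1/4:ℝ)^k) := by
    have hnn : ∀ k : ℕ, (0:ℝ) ≤ (N (k+1) : ℝ) * q₀ (k+1) * (1/4:ℝ)^k := by
      intro k; have := hq₀nn k; have := hNnn k; positivity
    have hle : ∀ k : ℕ, (N (k+1) : ℝ) * q₀ (k+1) * (1/4:ℝ)^k
        ≤ ((k:ℝ)+1) * (N (k+1) : ℝ) * q₀ (k+1) * (1/4:ℝ)^k := by
      intro k
      nlinarith [hnn k]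
    exact Summable.of_nonneg_of_le hnn hle hSg
  have hSB : Summable (fun k : ℕ => (k:ℝ) * (N (k+1) : ℝ) * q₀ (k+1) * (1/4:ℝ)^(k-1)) := by
    have hnn : ∀ k : ℕ, (0:ℝ) ≤ (k:ℝ) * (N (k+1) : ℝ) * q₀ (k+1) * (1/4:ℝ)^(k-1) := by
      intro k; have := hq₀nn k; have := hNnn k; positivity
    have hle : ∀ k : ℕ, (k:ℝ) * (N (k+1) : ℝ) * q₀ (k+1) * (1/4:ℝ)^(k-1)
        ≤ 4 * (((k:ℝ)+1) * (N (k+1) : ℝ) * q₀ (k+1) * (1/4:ℝ)^k) := by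
      intro k
      rcases Nat.eq_zero_or_pos k with rfl | hk
      · simpa using mul_nonneg (by norm_num : (0:ℝ) ≤ 4) (hgnn 0)
      · obtain ⟨j, rfl⟩ := Nat.exists_eq_add_of_le hk
        have e1 : 1 + j - 1 = j := by omega
        rw [e1]
        have e2 : ((1 + j : ℕ):ℝ) = (j:ℝ)+1 := by push_cast; ring
        rw [e2]
        have hq' := hq₀nn (1+j); have hN' := hNnn (1+j)
        have h4 : (1/4:ℝ)^j = 4 * (1/4:ℝ)^(1+j) := by
          rw [show 1+j = j+1 from by omega, pow_succ]; ring
        rw [h4]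
        have hp : (0:ℝ) ≤ ((j:ℝ)+1) * (N (1+j+1) : ℝ) * q₀ (1+j+1) * (1/4:ℝ)^(1+j) := by
          positivity
        nlinarith [hp]
    exact Summable.of_nonneg_of_le hnn hle (hSg.mul_left 4)
  -- positivity of A and B
  obtain ⟨k₁, hk₁lb, hk₁ge⟩ := (hlb.and (eventually_ge_atTop 1)).exists
  have hq₀k₁ : 0 < q₀ (k₁+1) := by
    have hpow : (0:ℝ) < ((k₁:ℝ)+1)^(-a) := Real.rpow_pos_of_pos (by positivity) _
    nlinarith [hk₁lb]
  have hApos : 0 < A := by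
    rw [hA]
    refine Summable.tsum_pos hSA (fun k => by have := hq₀nn k; have := hNnn k; positivity) k₁ ?_
    have := hNpos k₁
    have : (0:ℝ) < (N (k₁+1) : ℝ) := by exact_mod_cast this
    positivity
  have hBpos : 0 < B := by
    rw [hB]
    refine Summable.tsum_pos hSB (fun k => by have := hq₀nn k; have := hNnn k; positivity) k₁ ?_
    have := hNpos k₁
    have h1 : (0:ℝ) < (N (k₁+1) : ℝ) := by exact_mod_cast this
    have h2 : (0:ℝ) < (k₁:ℝ) := by exact_mod_cast hk₁ge
    positivity
  have hden : (0:ℝ) < 4 * A + B := by linarith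
  have hcpos : 0 < c := by rw [hc]; positivity
  have hβpos : 0 < β := by rw [hβ]; positivity
  have hβlt : β < 1 := by rw [hβ, div_lt_one hden]; linarith
  have hβne : β ≠ 0 := ne_of_gt hβpos
  have hqk : ∀ k : ℕ, q (k+1) = c * (β/4)^k * q₀ (k+1) := by
    intro k
    rw [hq (k+1) (by omega)]
    congr 2
  have hqknn : ∀ k : ℕ, 0 ≤ q (k+1) := by
    intro k; rw [hqk]
    have := hq₀nn k
    positivity
  -- generic pow identity
  have hpows : ∀ (x : ℝ) (k : ℕ), (β/4)^k * x^k = (1/4:ℝ)^k * (β*x)^k := by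
    intro x k
    rw [← mul_pow, ← mul_pow]
    congr 1
    ring
  -- term rewriting at the point 1/β
  have htermy : ∀ k : ℕ, (N (k+1) : ℝ) * q (k+1) * (1/β)^k
      = c * ((N (k+1) : ℝ) * q₀ (k+1) * (1/4:ℝ)^k) := by
    intro k
    rw [hqk k]
    have h := hpows (1/β) k
    have hβ1 : β * (1/β) = 1 := by field_simp
    rw [hβ1, one_pow, mul_one] at h
    calc (N (k+1) : ℝ) * (c * (β/4)^k * q₀ (k+1)) * (1/β)^k
        = c * ((N (k+1) : ℝ) * q₀ (k+1)) * ((β/4)^k * (1/β)^k) := by ring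
      _ = c * ((N (k+1) : ℝ) * q₀ (k+1) * (1/4:ℝ)^k) := by rw [h]; ring
  have hy_sum : Summable (fun k : ℕ => (N (k+1) : ℝ) * q (k+1) * (1/β)^k) :=
    (hSA.mul_left c).congr (fun k => (htermy k).symm)
  have hval3 : (∑' k : ℕ, (N (k+1) : ℝ) * q (k+1) * (1/β)^k) = 1 - β := by
    rw [tsum_congr htermy, tsum_mul_left, ← hA, hc, hβ]
    field_simp
    ring
  -- term rewriting for the derivative series
  have htermB : ∀ k : ℕ, (k:ℝ) * (N (k+1) : ℝ) * q (k+1) * (1/β)^(k-1)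
      = (c*β/4) * ((k:ℝ) * (N (k+1) : ℝ) * q₀ (k+1) * (1/4:ℝ)^(k-1)) := by
    intro k
    rcases Nat.eq_zero_or_pos k with rfl | hk
    · simp
    obtain ⟨j, rfl⟩ := Nat.exists_eq_add_of_le hk
    have e1 : 1 + j - 1 = j := by omega
    rw [e1, hqk (1+j)]
    have h := hpows (1/β) j
    have hβ1 : β * (1/β) = 1 := by field_simp
    rw [hβ1, one_pow, mul_one] at h
    have e3 : (β/4)^(1+j) = (β/4) * (β/4)^j := by rw [show 1+j = j+1 from by omega, pow_succ]; ring
    calc ((1+j : ℕ):ℝ) * (N (1+j+1) : ℝ) * (c * (β/4)^(1+j) * q₀ (1+j+1)) * (1/β)^j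
        = (c*β/4) * (((1+j : ℕ):ℝ) * (N (1+j+1) : ℝ) * q₀ (1+j+1)) * ((β/4)^j * (1/β)^j) := by
          rw [e3]; ring
      _ = (c*β/4) * (((1+j : ℕ):ℝ) * (N (1+j+1) : ℝ) * q₀ (1+j+1) * (1/4:ℝ)^j) := by
          rw [h]; ring
  have hD : Summable (fun k : ℕ => (k:ℝ) * (N (k+1) : ℝ) * q (k+1) * (1/β)^(k-1)) :=
    (hSB.mul_left (c*β/4)).congr (fun k => (htermB k).symm)
  have hval4 : (∑' k : ℕ, (k:ℝ) * (N (k+1) : ℝ) * q (k+1) * (1/β)^(k-1)) = β^2 := by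
    rw [tsum_congr htermB, tsum_mul_left, ← hB, hc, hβ]
    field_simp
  -- convergence for |x| < 1/β
  have hconv : ∀ x : ℝ, |x| < 1/β →
      Summable (fun k : ℕ => (N (k+1) : ℝ) * q (k+1) * x^k) := by
    intro x hx
    apply Summable.of_norm_bounded (hSA.mul_left c)
    intro k
    have hnq : 0 ≤ (N (k+1) : ℝ) * q (k+1) := mul_nonneg (hNnn k) (hqknn k)
    have h1 : ‖(N (k+1) : ℝ) * q (k+1) * x^k‖ = (N (k+1) : ℝ) * q (k+1) * |x|^k := by
      rw [Real.norm_eq_abs, abs_mul, abs_pow, abs_of_nonneg hnq]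
    rw [h1, hqk k]
    have hβx : β * |x| ≤ 1 := by
      have := mul_lt_mul_of_pos_left hx hβpos
      rw [mul_one_div, div_self hβne] at this
      linarith
    have h2 : (β/4)^k * |x|^k ≤ (1/4:ℝ)^k := by
      rw [hpows |x| k]
      have h3 : (β*|x|)^k ≤ 1 := pow_le_one₀ (by positivity) hβx
      nlinarith [pow_nonneg (show (0:ℝ) ≤ 1/4 by norm_num) k,
        pow_nonneg (mul_nonneg (le_of_lt hβpos) (abs_nonneg x)) k]
    have := hq₀nn k; have := hNnn k
    calc (N (k+1) : ℝ) * (c * (β/4)^k * q₀ (k+1)) * |x|^k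
        = c * ((N (k+1) : ℝ) * q₀ (k+1)) * ((β/4)^k * |x|^k) := by ring
      _ ≤ c * ((N (k+1) : ℝ) * q₀ (k+1)) * (1/4:ℝ)^k := by
          apply mul_le_mul_of_nonneg_left h2
          positivity
      _ = c * ((N (k+1) : ℝ) * q₀ (k+1) * (1/4:ℝ)^k) := by ring
  -- divergence for |x| > 1/β
  have hdiv : ∀ x : ℝ, 1/β < |x| →
      ¬ Summable (fun k : ℕ => (N (k+1) : ℝ) * q (k+1) * x^k) := by
    intro x hx hs
    set r := β * |x| with hr_def
    have hr : 1 < r := by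
      have := mul_lt_mul_of_pos_left hx hβpos
      rwa [mul_one_div, div_self hβne] at this
    have hrpos : (0:ℝ) < r := by linarith
    obtain ⟨m, ham⟩ : ∃ m : ℕ, a + 1 ≤ (m:ℝ) := by
      refine ⟨⌈a⌉₊ + 2, ?_⟩
      have := Nat.le_ceil a
      push_cast
      linarith
    -- the dominating sequence tends to 0
    have hu : Tendsto (fun k : ℕ => ((k:ℝ)+1)^m / r^k) atTop (nhds 0) := by
      have h1 := tendsto_pow_const_div_const_pow_of_one_lt m hr
      have h2 := h1.comp (tendsto_add_atTop_nat 1)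
      have h3 := h2.const_mul r
      rw [mul_zero] at h3
      apply h3.congr
      intro k
      have hrne : r ≠ 0 := ne_of_gt hrpos
      simp only [Function.comp]
      have hc1 : ((k+1 : ℕ):ℝ) = (k:ℝ)+1 := by push_cast; ring
      rw [hc1, pow_succ]
      field_simp
    have hu_small : ∀ᶠ k : ℕ in atTop, ((k:ℝ)+1)^m / r^k ≤ c/4 :=
      hu.eventually (eventually_le_nhds (by positivity))
    -- terms tend to 0
    have h0 : Tendsto (fun k : ℕ => (N (k+1) : ℝ) * q (k+1) * x^k) atTop (nhds 0) :=
      hs.tendsto_atTop_zero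
    have h0' : ∀ᶠ k : ℕ in atTop, |(N (k+1) : ℝ) * q (k+1) * x^k| < 2 := by
      have := h0.abs
      rw [abs_zero] at this
      exact this.eventually (eventually_lt_nhds (by norm_num))
    obtain ⟨k, hklb, hksm, hkabs⟩ := (hlb.and (hu_small.and h0')).exists
    set P : ℝ := (k:ℝ)+1 with hP_def
    have hPpos : (0:ℝ) < P := by positivity
    have hP1 : (1:ℝ) ≤ P := by rw [hP_def]; have : (0:ℝ) ≤ (k:ℝ) := Nat.cast_nonneg k; linarith
    have hPm_pos : (0:ℝ) < P^m := by positivity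
    have hrk_pos : (0:ℝ) < r^k := by positivity
    -- |term| = c * N * q₀ * (r/4)^k
    have habs : |(N (k+1) : ℝ) * q (k+1) * x^k|
        = c * (N (k+1) : ℝ) * q₀ (k+1) * (r/4)^k := by
      have hnq : 0 ≤ (N (k+1) : ℝ) * q (k+1) := mul_nonneg (hNnn k) (hqknn k)
      rw [abs_mul, abs_pow, abs_of_nonneg hnq, hqk k]
      have : (β/4)^k * |x|^k = (r/4)^k := by
        rw [← mul_pow]
        congr 1
        rw [hr_def]; ring
      calc (N (k+1) : ℝ) * (c * (β/4)^k * q₀ (k+1)) * |x|^k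
          = c * (N (k+1) : ℝ) * q₀ (k+1) * ((β/4)^k * |x|^k) := by ring
        _ = c * (N (k+1) : ℝ) * q₀ (k+1) * (r/4)^k := by rw [this]
    -- lower bound the term
    have hN4 : (4:ℝ)^k ≤ P * (N (k+1) : ℝ) := by
      have := Nlb k
      rw [hNk k]
      exact this
    have hs1 : (4:ℝ)^k * (r/4)^k = r^k := by
      rw [← mul_pow]
      congr 1
      field_simp
    have hs2 : P^(-a) * P^(a+1) = P := by
      rw [← Real.rpow_add hPpos]
      norm_num
    have hs3 : P^(a+1) ≤ P^m := by
      rw [← Real.rpow_natCast P m]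
      exact Real.rpow_le_rpow_of_exponent_le hP1 ham
    have hPa_pos : (0:ℝ) < P^(-a) := Real.rpow_pos_of_pos hPpos _
    have hPa1_pos : (0:ℝ) < P^(a+1) := Real.rpow_pos_of_pos hPpos _
    have hrq_nn : (0:ℝ) ≤ (r/4)^k := by positivity
    set X : ℝ := c * (N (k+1) : ℝ) * q₀ (k+1) * (r/4)^k with hX_def
    have hXnn : 0 ≤ X := by
      have := hq₀nn k; have := hNnn k
      positivity
    -- X * P * P^(a+1) ≥ (c/2) * r^k * P
    have key1 : (c/2) * r^k * P ≤ X * P * P^(a+1) := by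
      have e1 : X * P * P^(a+1) = c * (P * (N (k+1) : ℝ)) * (q₀ (k+1) * P^(a+1)) * (r/4)^k := by
        rw [hX_def]; ring
      have e2 : (1/2) * P^(-a) * P^(a+1) ≤ q₀ (k+1) * P^(a+1) :=
        mul_le_mul_of_nonneg_right hklb (le_of_lt hPa1_pos)
      have e3 : (1/2) * P^(-a) * P^(a+1) = P/2 := by
        rw [mul_assoc, hs2]; ring
      rw [e1]
      have e4 : c * (4:ℝ)^k * (P/2) * (r/4)^k ≤ c * (P * (N (k+1) : ℝ)) * (q₀ (k+1) * P^(a+1)) * (r/4)^k := by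
        apply mul_le_mul_of_nonneg_right _ hrq_nn
        have h5 : c * (4:ℝ)^k * (P/2) ≤ c * (P * (N (k+1) : ℝ)) * (P/2) := by
          apply mul_le_mul_of_nonneg_right (mul_le_mul_of_nonneg_left hN4 (le_of_lt hcpos))
          positivity
        calc c * (4:ℝ)^k * (P/2) ≤ c * (P * (N (k+1) : ℝ)) * (P/2) := h5
          _ ≤ c * (P * (N (k+1) : ℝ)) * (q₀ (k+1) * P^(a+1)) := by
              apply mul_le_mul_of_nonneg_left
              · rw [← e3]; exact e2
              · have := hNnn k; positivity
      calc (c/2) * r^k * P = c * (4:ℝ)^k * (P/2) * (r/4)^k := by rw [← hs1]; ring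
        _ ≤ _ := e4
    have key2 : (c/2) * r^k ≤ X * P^(a+1) := by
      have := (mul_le_mul_iff_of_pos_right hPpos).1 (by
        calc (c/2) * r^k * P ≤ X * P * P^(a+1) := key1
          _ = X * P^(a+1) * P := by ring)
      exact this
    have key3 : (c/2) * r^k ≤ X * P^m :=
      le_trans key2 (mul_le_mul_of_nonneg_left hs3 hXnn)
    -- from hksm : P^m / r^k ≤ c/4, get P^m ≤ (c/4) * r^k
    have hkPm : P^m ≤ (c/4) * r^k := by
      rw [div_le_iff₀ hrk_pos] at hksm
      linarith [hksm]
    -- conclude 2 ≤ X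
    have hX2 : 2 ≤ X := by
      have h6 : X * P^m ≤ X * ((c/4) * r^k) := mul_le_mul_of_nonneg_left hkPm hXnn
      -- (c/2) r^k ≤ X * (c/4) r^k  ⇒  2 ≤ X
      have h7 : (c/2) * r^k ≤ X * ((c/4) * r^k) := le_trans key3 h6
      have h8 : 0 < (c/4) * r^k := by positivity
      nlinarith [h7, h8]
    rw [habs] at hkabs
    linarith
  refine ⟨⟨hβpos, hβlt⟩, hconv, hdiv, hval3, hval4, ?_⟩
  -- uniqueness
  intro x hx1
  constructor
  · rintro ⟨hs, heq⟩
    rcases lt_trichotomy x (1/β) with hxy | h | hxy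
    · exfalso
      have hxpos : (0:ℝ) < x := by linarith
      have hxle : x ≤ 1/β := le_of_lt hxy
      -- ∑ f_y - ∑ f_x ≤ β² (y - x)
      have hsub : Summable (fun k : ℕ =>
          (N (k+1) : ℝ) * q (k+1) * (1/β)^k - (N (k+1) : ℝ) * q (k+1) * x^k) := hy_sum.sub hs
      have hDx : Summable (fun k : ℕ =>
          (k:ℝ) * (N (k+1) : ℝ) * q (k+1) * (1/β)^(k-1) * (1/β - x)) := hD.mul_right _
      have hterm_le : ∀ k : ℕ,
          (N (k+1) : ℝ) * q (k+1) * (1/β)^k - (N (k+1) : ℝ) * q (k+1) * x^k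
          ≤ (k:ℝ) * (N (k+1) : ℝ) * q (k+1) * (1/β)^(k-1) * (1/β - x) := by
        intro k
        have hnq : 0 ≤ (N (k+1) : ℝ) * q (k+1) := mul_nonneg (hNnn k) (hqknn k)
        have hpp := pow_sub_pow_le x (1/β) (le_of_lt hxpos) hxle k
        calc (N (k+1) : ℝ) * q (k+1) * (1/β)^k - (N (k+1) : ℝ) * q (k+1) * x^k
            = ((N (k+1) : ℝ) * q (k+1)) * ((1/β)^k - x^k) := by ring
          _ ≤ ((N (k+1) : ℝ) * q (k+1)) * ((k:ℝ) * (1/β)^(k-1) * (1/β - x)) :=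
              mul_le_mul_of_nonneg_left hpp hnq
          _ = (k:ℝ) * (N (k+1) : ℝ) * q (k+1) * (1/β)^(k-1) * (1/β - x) := by ring
      have hle := Summable.tsum_le_tsum hterm_le hsub hDx
      rw [Summable.tsum_sub hy_sum hs, tsum_mul_right, hval4, hval3, heq] at hle
      -- hle : (1 - β) - (1 - 1/x) ≤ β² * (1/β - x)
      have hβx : β * x < 1 := by
        have := mul_lt_mul_of_pos_left hxy hβpos
        rwa [mul_one_div, div_self hβne] at this
      have hsimp : β^2 * (1/β - x) = β - β^2*x := by
        field_simp
      rw [hsimp] at hle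
      have hident : 1/x - 2*β + β^2*x = (1-β*x)^2/x := by
        field_simp
        ring
      have hpos2 : 0 < (1-β*x)^2/x := by
        have h9 : (0:ℝ) < 1 - β*x := by linarith
        positivity
      linarith [hle, hpos2, hident]
    · exact h
    · exfalso
      apply hdiv x _ hs
      rw [abs_of_pos (by linarith : (0:ℝ) < x)]
      exact hxy
  · rintro rfl
    refine ⟨hy_sum, ?_⟩
    rw [hval3, one_div_one_div]
end

section
/- There exists a finite constant K such that for every integer p ≥ 2 and every j ∈ {0, 1, …, p}, the discrete bridge of length p satisfies E[Y_j²] ≤ K · j·(p−j)/p. -/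
open Finset

local notation "tup" => Finset.Nat.antidiagonalTuple
local notation "mc" => Nat.multichoose

lemma fiber_card (k n a : ℕ) (ha : a ≤ n) :
    ((tup (k+1) n).filter (fun f => f 0 = a)).card = (tup k (n-a)).card := by
  apply Finset.card_nbij' (fun f => Fin.tail f) (fun g => Fin.cons a g)
  · intro f hf
    simp only [mem_coe, mem_filter, Finset.Nat.mem_antidiagonalTuple, Fin.sum_univ_succ] at hf ⊢
    show ∑ i : Fin k, f i.succ = n - a
    omega
  · intro g hg
    simp only [mem_coe, Finset.Nat.mem_antidiagonalTuple] at hg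
    simp only [mem_coe, mem_filter, Finset.Nat.mem_antidiagonalTuple, Fin.sum_univ_succ, Fin.cons_zero,
      Fin.cons_succ]
    exact ⟨by omega, trivial⟩
  · intro f hf
    simp only [mem_coe, mem_filter] at hf
    rw [← hf.2]
    exact Fin.cons_self_tail f
  · intro g hg
    funext i
    simp [Fin.tail]

lemma sumA (F : ℕ → ℕ) (k n : ℕ) :
    ∑ f ∈ tup (k+1) n, F (f 0) = ∑ a ∈ range (n+1), F a * (tup k (n-a)).card := by
  have hmap : ∀ f ∈ tup (k+1) n, (fun f : Fin (k+1) → ℕ => f 0) f ∈ range (n+1) := by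
    intro f hf
    rw [Finset.Nat.mem_antidiagonalTuple] at hf
    simp only [mem_range]
    have h2 : f 0 ≤ ∑ i, f i :=
      Finset.single_le_sum (f := f) (fun i _ => Nat.zero_le _) (Finset.mem_univ 0)
    omega
  have h := Finset.sum_fiberwise_of_maps_to hmap (fun f => F (f 0))
  rw [← h]
  refine Finset.sum_congr rfl fun a ha => ?_
  rw [mem_range] at ha
  have h1 : ∑ f ∈ (tup (k+1) n).filter (fun f => f 0 = a), F (f 0)
      = ∑ f ∈ (tup (k+1) n).filter (fun f => f 0 = a), F a := by
    refine Finset.sum_congr rfl fun f hf => ?_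
    rw [mem_filter] at hf
    show F (f 0) = F a
    exact congrArg F hf.2
  have h2 := fiber_card k n a (Nat.lt_succ_iff.mp ha)
  rw [h1, Finset.sum_const, smul_eq_mul, h2, mul_comm]

lemma mc_sum (k n : ℕ) : mc (k+1) n = ∑ a ∈ range (n+1), mc k (n-a) := by
  induction n with
  | zero => simp
  | succ n ih =>
    rw [Finset.sum_range_succ' (fun a => mc k (n+1-a)) (n+1)]
    simp only [Nat.succ_sub_succ, Nat.sub_zero]
    rw [← ih, Nat.multichoose_succ_succ]
    omega

lemma tup_card (k n : ℕ) : (tup k n).card = mc k n := by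
  induction k generalizing n with
  | zero =>
    cases n with
    | zero => simp [Finset.Nat.antidiagonalTuple_zero_zero]
    | succ n => simp [Finset.Nat.antidiagonalTuple_zero_succ]
  | succ k ih =>
    have h : (tup (k+1) n).card = ∑ f ∈ tup (k+1) n, (fun _ : ℕ => 1) (f 0) :=
      (Finset.card_eq_sum_ones _)
    rw [h, sumA (fun _ => 1) k n, mc_sum k n]
    refine Finset.sum_congr rfl fun a _ => ?_
    rw [one_mul, ih]

lemma mc_vandermonde (j k : ℕ) : ∀ n, ∑ a ∈ range (n+1), mc j a * mc k (n-a) = mc (k+j) n := by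
  induction j with
  | zero =>
    intro n
    rw [Finset.sum_eq_single 0]
    · simp
    · intro a _ ha
      obtain ⟨a', rfl⟩ := Nat.exists_eq_succ_of_ne_zero ha
      simp [Nat.multichoose_zero_succ]
    · simp
  | succ j ihj =>
    intro n
    induction n with
    | zero => simp
    | succ n ihn =>
      rw [Finset.sum_range_succ' (fun a => mc (j+1) a * mc k (n+1-a)) (n+1)]
      simp only [Nat.succ_sub_succ, Nat.sub_zero]
      have hsplit : ∀ a : ℕ, mc (j+1) (a+1) * mc k (n-a)
          = mc j (a+1) * mc k (n-a) + mc (j+1) a * mc k (n-a) := by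
        intro a
        rw [Nat.multichoose_succ_succ, add_mul]
      simp only [hsplit]
      rw [Finset.sum_add_distrib]
      have h1 : ∑ a ∈ range (n+1), mc j (a+1) * mc k (n-a) + mc (j+1) 0 * mc k (n+1)
          = ∑ a ∈ range (n+2), mc j a * mc k (n+1-a) := by
        rw [Finset.sum_range_succ' (fun a => mc j a * mc k (n+1-a)) (n+1)]
        simp only [Nat.succ_sub_succ, Nat.sub_zero]
        simp
      have h2 : ∑ a ∈ range (n+2), mc j a * mc k (n+1-a) = mc (k+j) (n+1) := ihj (n+1)
      have h3 : mc (k + (j+1)) (n+1) = mc (k+j) (n+1) + mc (k+(j+1)) n := by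
        have := Nat.multichoose_succ_succ (k+j) n
        rw [show k + (j+1) = k+j+1 by omega]; exact this
      omega

lemma mc_ratio (q : ℕ) : mc (q+3) (q+1) ≤ 4 * mc (q+1) (q+1) := by
  have e1 : mc (q+3) (q+1) = (2*q+3).choose (q+1) := by
    rw [Nat.multichoose_eq]
    congr 1
    omega
  have e2 : mc (q+1) (q+1) = (2*q+1).choose (q+1) := by
    rw [Nat.multichoose_eq]
    congr 1
    omega
  rw [e1, e2]
  have h1 : (2*q+3).choose (q+1) = (2*q+3).choose (q+2) := by
    have h := Nat.choose_symm (n := 2*q+3) (k := q+2) (by omega)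
    rw [show 2*q+3-(q+2) = q+1 by omega] at h
    exact h
  have h2 : (2*q+3) * (2*q+2).choose (q+1) = (2*q+3).choose (q+2) * (q+2) := by
    have h := Nat.add_one_mul_choose_eq (2*q+2) (q+1)
    simpa [Nat.succ_eq_add_one, show 2*q+2+1 = 2*q+3 by omega] using h
  have h3 : (2*q+2).choose (q+1) = (2*q+1).choose q + (2*q+1).choose (q+1) := by
    have h := Nat.choose_succ_succ (2*q+1) q
    simpa [Nat.succ_eq_add_one, show 2*q+1+1 = 2*q+2 by omega] using h
  have h4 : (2*q+1).choose q = (2*q+1).choose (q+1) := by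
    have h := Nat.choose_symm (n := 2*q+1) (k := q+1) (by omega)
    rw [show 2*q+1-(q+1) = q by omega] at h
    exact h
  have key : (2*q+3).choose (q+1) * (q+2) ≤ (4 * (2*q+1).choose (q+1)) * (q+2) := by
    rw [h1, ← h2, h3, h4]
    nlinarith [Nat.zero_le ((2*q+1).choose (q+1))]
  exact Nat.le_of_mul_le_mul_right key (by omega)

lemma key_count (k : ℕ) :
    ∑ f ∈ tup (k+1) (k+1), mc 3 (f 0) ≤ 4 * (tup (k+1) (k+1)).card := by
  rw [sumA (fun a => mc 3 a) k (k+1), tup_card]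
  have h : ∑ a ∈ range (k+2), mc 3 a * (tup k (k+1-a)).card
      = ∑ a ∈ range (k+2), mc 3 a * mc k (k+1-a) := by
    refine Finset.sum_congr rfl fun a _ => ?_
    rw [tup_card]
  calc ∑ a ∈ range (k+1+1), mc 3 a * (tup k (k+1-a)).card
      = mc (k+3) (k+1) := by rw [show k+1+1 = k+2 from rfl, h, mc_vandermonde 3 k (k+1)]
    _ ≤ 4 * mc (k+1) (k+1) := mc_ratio k

lemma two_mc3 (s : ℕ) : 2 * mc 3 s = (s+1)*(s+2) := by
  induction s with
  | zero => simp [Nat.multichoose_zero_right]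
  | succ s ih =>
    rw [Nat.multichoose_succ_succ 2 s, Nat.multichoose_two, Nat.mul_add, ih]
    ring

lemma c_bound (k : ℕ)
    (hfin : Set.Finite {x : Fin (k+1) → ℤ | (∀ i, -1 ≤ x i) ∧ ∑ i, x i = 0}) :
    ∑ x ∈ hfin.toFinset, (x 0)^2 ≤ 8 * (hfin.toFinset.card : ℤ) := by
  have memE : ∀ x, x ∈ hfin.toFinset ↔ (∀ i, -1 ≤ x i) ∧ ∑ i, x i = 0 := by
    intro x; rw [Set.Finite.mem_toFinset]; rfl
  have hphi : ∀ x ∈ hfin.toFinset, (fun i => (x i + 1).toNat) ∈ tup (k+1) (k+1) := by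
    intro x hx
    rw [memE] at hx
    rw [Finset.Nat.mem_antidiagonalTuple]
    have hc : ((∑ i : Fin (k+1), (x i + 1).toNat : ℕ) : ℤ) = ((k+1 : ℕ) : ℤ) := by
      push_cast
      rw [Finset.sum_congr rfl (fun i _ => Int.toNat_of_nonneg (by linarith [hx.1 i]))]
      rw [Finset.sum_add_distrib, hx.2]
      simp
    exact_mod_cast hc
  have hpsi : ∀ f ∈ tup (k+1) (k+1), (fun i => (f i : ℤ) - 1) ∈ hfin.toFinset := by
    intro f hf
    rw [Finset.Nat.mem_antidiagonalTuple] at hf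
    rw [memE]
    constructor
    · intro i
      have : (0:ℤ) ≤ (f i : ℤ) := Int.natCast_nonneg _
      linarith
    · rw [Finset.sum_sub_distrib]
      have : ((∑ i, f i : ℕ) : ℤ) = ∑ i, (f i : ℤ) := by push_cast; rfl
      rw [← this, hf]
      simp
  have hji : ∀ x ∈ hfin.toFinset, (fun i => (((x i + 1).toNat : ℤ)) - 1) = x := by
    intro x hx
    rw [memE] at hx
    funext i
    rw [Int.toNat_of_nonneg (by linarith [hx.1 i])]
    ring
  have hij : ∀ f ∈ tup (k+1) (k+1), (fun i => (((f i : ℤ) - 1) + 1).toNat) = f := by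
    intro f _
    funext i
    simp
  have hsum : ∑ x ∈ hfin.toFinset, ((mc 3 ((x 0 + 1).toNat) : ℕ) : ℤ)
      = ((∑ f ∈ tup (k+1) (k+1), mc 3 (f 0) : ℕ) : ℤ) := by
    push_cast
    exact Finset.sum_nbij' (fun x => fun i => (x i + 1).toNat)
      (fun f => fun i => (f i : ℤ) - 1) hphi hpsi hji hij (fun x _ => rfl)
  have hcard : hfin.toFinset.card = (tup (k+1) (k+1)).card :=
    Finset.card_nbij' (fun x => fun i => (x i + 1).toNat)
      (fun f => fun i => (f i : ℤ) - 1) hphi hpsi hji hij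
  have hpt : ∀ x ∈ hfin.toFinset, (x 0)^2 ≤ 2 * ((mc 3 ((x 0 + 1).toNat) : ℕ) : ℤ) := by
    intro x hx
    rw [memE] at hx
    have h0 : ((((x 0 + 1).toNat) : ℕ) : ℤ) = x 0 + 1 := Int.toNat_of_nonneg (by linarith [hx.1 0])
    have h2 : ((2 * mc 3 ((x 0 + 1).toNat) : ℕ) : ℤ)
        = (x 0 + 2) * (x 0 + 3) := by
      rw [two_mc3]
      push_cast
      rw [h0]
      ring
    have h3 : (2 : ℤ) * ((mc 3 ((x 0 + 1).toNat) : ℕ) : ℤ) = (x 0 + 2) * (x 0 + 3) := by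
      rw [← h2]; push_cast; ring
    rw [h3]
    nlinarith [hx.1 0]
  calc ∑ x ∈ hfin.toFinset, (x 0)^2
      ≤ ∑ x ∈ hfin.toFinset, 2 * ((mc 3 ((x 0 + 1).toNat) : ℕ) : ℤ) :=
        Finset.sum_le_sum hpt
    _ = 2 * ∑ x ∈ hfin.toFinset, ((mc 3 ((x 0 + 1).toNat) : ℕ) : ℤ) := by
        rw [Finset.mul_sum]
    _ = 2 * ((∑ f ∈ tup (k+1) (k+1), mc 3 (f 0) : ℕ) : ℤ) := by rw [hsum]
    _ ≤ 2 * ((4 * (tup (k+1) (k+1)).card : ℕ) : ℤ) := by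
        have := key_count k
        have h4 : ((∑ f ∈ tup (k+1) (k+1), mc 3 (f 0) : ℕ) : ℤ)
            ≤ ((4 * (tup (k+1) (k+1)).card : ℕ) : ℤ) := by exact_mod_cast this
        linarith
    _ = 8 * (hfin.toFinset.card : ℤ) := by
        rw [hcard]; push_cast; ring

section
variable {n : ℕ} (hfin : Set.Finite {x : Fin n → ℤ | (∀ i, -1 ≤ x i) ∧ ∑ i, x i = 0})

lemma perm_sum (σ : Equiv.Perm (Fin n)) (F : (Fin n → ℤ) → ℤ) :
    ∑ x ∈ hfin.toFinset, F (x ∘ σ) = ∑ x ∈ hfin.toFinset, F x := by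
  have memE : ∀ x, x ∈ hfin.toFinset ↔ (∀ i, -1 ≤ x i) ∧ ∑ i, x i = 0 := by
    intro x; rw [Set.Finite.mem_toFinset]; rfl
  refine Finset.sum_nbij' (fun x => x ∘ σ) (fun x => x ∘ σ.symm) ?_ ?_ ?_ ?_ ?_
  · intro x hx
    rw [memE] at hx ⊢
    exact ⟨fun i => hx.1 (σ i), by rw [← hx.2]; exact Equiv.sum_comp σ x⟩
  · intro x hx
    rw [memE] at hx ⊢
    exact ⟨fun i => hx.1 (σ.symm i), by rw [← hx.2]; exact Equiv.sum_comp σ.symm x⟩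
  · intro x _; funext i; simp
  · intro x _; funext i; simp
  · intro x _; rfl

lemma diag_const (i i' : Fin n) :
    ∑ x ∈ hfin.toFinset, (x i)^2 = ∑ x ∈ hfin.toFinset, (x i')^2 := by
  have h := perm_sum hfin (Equiv.swap i' i) (fun y => (y i')^2)
  simp only [Function.comp] at h
  rw [Equiv.swap_apply_left] at h
  exact h

lemma pair_const (i j i' j' : Fin n) (hij : i ≠ j) (hij' : i' ≠ j') :
    ∑ x ∈ hfin.toFinset, x i * x j = ∑ x ∈ hfin.toFinset, x i' * x j' := by
  set τ : Equiv.Perm (Fin n) := Equiv.swap i' i with hτ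
  set σ : Equiv.Perm (Fin n) := (Equiv.swap j' (τ j)).trans τ with hσ
  have hσi : σ i' = i := by
    have h1 : Equiv.swap j' (τ j) i' = i' := by
      apply Equiv.swap_apply_of_ne_of_ne hij'
      intro hc
      have : j = τ i' := by
        rw [hc]; simp [hτ]
      rw [hτ, Equiv.swap_apply_left] at this
      exact hij this.symm
    rw [hσ, Equiv.trans_apply, h1, hτ, Equiv.swap_apply_left]
  have hσj : σ j' = j := by
    simp only [hσ, Equiv.trans_apply, Equiv.swap_apply_left, hτ, Equiv.swap_apply_self]
  have h := perm_sum hfin σ (fun y => y i' * y j')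
  simp only [Function.comp] at h
  rw [hσi, hσj] at h
  exact h

lemma expand_sq (i0 i1 : Fin n) (h01 : i0 ≠ i1) (S : Finset (Fin n)) :
    ∑ x ∈ hfin.toFinset, (∑ i ∈ S, x i)^2
      = (S.card : ℤ) * (∑ x ∈ hfin.toFinset, (x i0)^2)
        + (S.card : ℤ) * ((S.card : ℤ) - 1) * (∑ x ∈ hfin.toFinset, x i0 * x i1) := by
  set c : ℤ := ∑ x ∈ hfin.toFinset, (x i0)^2 with hc
  set d : ℤ := ∑ x ∈ hfin.toFinset, x i0 * x i1 with hd
  have step1 : ∑ x ∈ hfin.toFinset, (∑ i ∈ S, x i)^2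
      = ∑ i ∈ S, ∑ j ∈ S, ∑ x ∈ hfin.toFinset, x i * x j := by
    have h1 : ∀ x : Fin n → ℤ, (∑ i ∈ S, x i)^2 = ∑ i ∈ S, ∑ j ∈ S, x i * x j := by
      intro x
      rw [sq, Finset.sum_mul_sum]
    rw [Finset.sum_congr rfl (fun x _ => h1 x), Finset.sum_comm]
    refine Finset.sum_congr rfl fun i _ => ?_
    rw [Finset.sum_comm]
  have step2 : ∀ i ∈ S, ∀ j ∈ S, ∑ x ∈ hfin.toFinset, x i * x j = if i = j then c else d := by
    intro i _ j _
    split_ifs with h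
    · subst h
      rw [hc]
      rw [Finset.sum_congr rfl (fun x _ => (sq (x i)).symm)]
      exact diag_const hfin i i0
    · exact pair_const hfin i j i0 i1 h h01
  have step3 : ∀ i ∈ S, ∑ j ∈ S, (if i = j then c else d) = (S.card : ℤ) * d + (c - d) := by
    intro i hi
    have h1 : ∀ j, (if i = j then c else d) = d + (if i = j then c - d else 0) := by
      intro j; split_ifs <;> ring
    rw [Finset.sum_congr rfl (fun j _ => h1 j), Finset.sum_add_distrib, Finset.sum_const,
      Finset.sum_ite_eq, if_pos hi, nsmul_eq_mul]
  calc ∑ x ∈ hfin.toFinset, (∑ i ∈ S, x i)^2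
      = ∑ i ∈ S, ∑ j ∈ S, ∑ x ∈ hfin.toFinset, x i * x j := step1
    _ = ∑ i ∈ S, ((S.card : ℤ) * d + (c - d)) := by
        refine Finset.sum_congr rfl fun i hi => ?_
        rw [Finset.sum_congr rfl (fun j hj => step2 i hi j hj), step3 i hi]
    _ = (S.card : ℤ) * c + (S.card : ℤ) * ((S.card : ℤ) - 1) * d := by
        rw [Finset.sum_const, nsmul_eq_mul]
        ring

end

lemma card_filter_lt_aux (k j : ℕ) (hj : j ≤ k + 2) :
    ((univ : Finset (Fin (k+2))).filter (fun i : Fin (k+2) => (i:ℕ) < j)).card = j := by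
  have h := Finset.card_nbij' (s := (univ : Finset (Fin (k+2))).filter (fun i : Fin (k+2) => (i:ℕ) < j))
    (t := range j) (fun x : Fin (k+2) => (x:ℕ))
    (fun a => (⟨min a (k+1), by omega⟩ : Fin (k+2))) ?_ ?_ ?_ ?_
  · rw [h, Finset.card_range]
  · intro x hx
    rw [mem_coe, mem_filter] at hx
    rw [mem_coe, mem_range]
    exact hx.2
  · intro a ha
    rw [mem_coe, mem_range] at ha
    rw [mem_coe, mem_filter]
    refine ⟨mem_univ _, ?_⟩
    show min a (k+1) < j
    omega
  · intro x hx
    rw [mem_coe, mem_filter] at hx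
    apply Fin.ext
    show min (x:ℕ) (k+1) = (x:ℕ)
    have := x.isLt
    omega
  · intro a ha
    rw [mem_coe, mem_range] at ha
    show min a (k+1) = a
    omega

/-- There is a finite constant `K` such that for every `p ≥ 2` and
every `j ∈ {0,…,p}`, the discrete bridge of length `p` (the partial-sum process
`Y_j = x_1 + ⋯ + x_j` of a uniform vector in
`E_p = {x ∈ {-1,0,1,…}^p : ∑ x_i = 0}`) satisfies `E[Y_j²] ≤ K · j(p-j)/p`. -/
theorem stmt_2 :
    ∃ K : ℝ, ∀ p : ℕ, 2 ≤ p →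
      ∀ hfin : {x : Fin p → ℤ | (∀ i, -1 ≤ x i) ∧ ∑ i, x i = 0}.Finite,
      ∀ j : ℕ, j ≤ p →
        (∑ x ∈ hfin.toFinset,
            (((∑ i ∈ univ.filter (fun i : Fin p => (i : ℕ) < j), x i : ℤ) : ℝ)) ^ 2) /
            (hfin.toFinset.card : ℝ) ≤
          K * ((j : ℝ) * ((p : ℝ) - (j : ℝ)) / (p : ℝ)) := by
  refine ⟨16, ?_⟩
  intro p hp hfin j hj
  obtain ⟨k, rfl⟩ : ∃ k, p = k + 2 := ⟨p - 2, by omega⟩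
  have memE : ∀ x, x ∈ hfin.toFinset ↔ (∀ i, -1 ≤ x i) ∧ ∑ i, x i = 0 := by
    intro x; rw [Set.Finite.mem_toFinset]; rfl
  have h01 : (0 : Fin (k+2)) ≠ 1 := by
    apply Fin.ne_of_val_ne
    simp
  set E := hfin.toFinset with hE
  set Sj := (univ : Finset (Fin (k+2))).filter (fun i : Fin (k+2) => (i:ℕ) < j) with hSj
  set c : ℤ := ∑ x ∈ E, (x 0)^2 with hc
  set d : ℤ := ∑ x ∈ E, x 0 * x 1 with hd
  set A : ℤ := ∑ x ∈ E, (∑ i ∈ Sj, x i)^2 with hA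
  set N : ℕ := E.card with hN
  -- nonempty
  have hNpos : 0 < N := by
    rw [hN, hE, Finset.card_pos]
    exact ⟨fun _ => 0, (memE _).mpr ⟨fun i => by norm_num, by simp⟩⟩
  -- expansion for univ
  have huniv := expand_sq hfin 0 1 h01 univ
  rw [← hE, ← hc, ← hd, Finset.card_univ, Fintype.card_fin] at huniv
  have huniv0 : ∑ x ∈ E, (∑ i ∈ (univ : Finset (Fin (k+2))), x i)^2 = 0 := by
    rw [Finset.sum_congr rfl (fun x hx => by rw [((memE x).mp ((hE ▸ hx : x ∈ hfin.toFinset))).2])]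
    simp
  rw [huniv0] at huniv
  have hee : c + ((k:ℤ)+1) * d = 0 := by
    have hk2 : ((k:ℤ)+2) ≠ 0 := by positivity
    have h2 : ((k:ℤ)+2) * (c + ((k:ℤ)+1) * d) = 0 := by
      push_cast at huniv
      linarith [huniv]
    rcases mul_eq_zero.mp h2 with h | h
    · exact absurd h hk2
    · exact h
  -- expansion for Sj
  have hAj := expand_sq hfin 0 1 h01 Sj
  rw [← hE, ← hc, ← hd, ← hA] at hAj
  have hcardSj : Sj.card = j := by rw [hSj]; exact card_filter_lt_aux k j hj
  rw [hcardSj] at hAj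
  -- key identity
  have hkey : ((k:ℤ)+1) * A = (j:ℤ) * (((k:ℤ)+2) - (j:ℤ)) * c := by
    linear_combination ((k:ℤ)+1) * hAj + ((j:ℤ)*((j:ℤ)-1)) * hee
  -- bounds
  have hcb : c ≤ 8 * (N : ℤ) := by
    rw [hc, hN, hE]
    exact c_bound (k+1) hfin
  have hA0 : 0 ≤ A := by
    rw [hA]; exact Finset.sum_nonneg fun x _ => sq_nonneg _
  have hc0 : 0 ≤ c := by
    rw [hc]; exact Finset.sum_nonneg fun x _ => sq_nonneg _
  have hjfac : 0 ≤ (j:ℤ) * (((k:ℤ)+2) - (j:ℤ)) := by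
    apply mul_nonneg (Int.natCast_nonneg j)
    have : (j:ℤ) ≤ (k:ℤ)+2 := by exact_mod_cast hj
    linarith
  have hZ : ((k:ℤ)+2) * A ≤ 16 * ((j:ℤ) * (((k:ℤ)+2) - (j:ℤ))) * N := by
    calc ((k:ℤ)+2) * A ≤ (2*((k:ℤ)+1)) * A := by
          apply mul_le_mul_of_nonneg_right _ hA0
          have : (0:ℤ) ≤ k := Int.natCast_nonneg k
          linarith
      _ = 2 * (((k:ℤ)+1) * A) := by ring
      _ = 2 * ((j:ℤ) * (((k:ℤ)+2) - (j:ℤ)) * c) := by rw [hkey]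
      _ ≤ 2 * ((j:ℤ) * (((k:ℤ)+2) - (j:ℤ)) * (8 * N)) := by
          apply mul_le_mul_of_nonneg_left _ (by norm_num)
          exact mul_le_mul_of_nonneg_left hcb hjfac
      _ = 16 * ((j:ℤ) * (((k:ℤ)+2) - (j:ℤ))) * N := by ring
  -- pass to reals
  have hL : (∑ x ∈ E, (((∑ i ∈ Sj, x i : ℤ) : ℝ)) ^ 2) = ((A : ℤ) : ℝ) := by
    rw [hA]
    push_cast
    rfl
  rw [hL]
  have hNR : (0:ℝ) < (N:ℝ) := by exact_mod_cast hNpos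
  have hPpos : (0:ℝ) < ((k:ℝ)+2) := by positivity
  rw [div_le_iff₀ hNR]
  have hcast : (((k+2 : ℕ)):ℝ) = (k:ℝ)+2 := by push_cast; ring
  rw [hcast]
  rw [show (16:ℝ) * ((j:ℝ) * (((k:ℝ)+2) - (j:ℝ)) / ((k:ℝ)+2)) * (N:ℝ)
      = (16 * ((j:ℝ) * (((k:ℝ)+2) - (j:ℝ))) * (N:ℝ)) / ((k:ℝ)+2) by ring]
  rw [le_div_iff₀ hPpos]
  have hZR : ((k:ℝ)+2) * (A:ℝ) ≤ 16 * ((j:ℝ) * (((k:ℝ)+2) - (j:ℝ))) * (N:ℝ) := by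
    exact_mod_cast hZ
  linarith
end

section
/- Assume there exists a constant K' ∈ (0,1] such that ℙ(V > n) ≥ K' · n^{−1/α} for every integer n ≥ 1, where V = inf{n ≥ 0 : S_n = −1}. Then for every integer n ≥ 1 and every real x ≥ 1, ℙ(−J_n ≥ x · n^{1/α}) ≤ exp(−K'·x/2), where J_n = min_{0≤k≤n} S_k. -/
open MeasureTheory ProbabilityTheory Filter


lemma firstHit (g : ℕ → ℤ) (hg : ∀ i, -1 ≤ g i) (k : ℕ)
    (hk : (∑ i ∈ Finset.range k, g i) ≤ -1) :
    ∃ t, t ≤ k ∧ (∑ i ∈ Finset.range t, g i) = -1 ∧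
      ∀ l < t, -1 < (∑ i ∈ Finset.range l, g i) := by
  classical
  have hex : ∃ t, (∑ i ∈ Finset.range t, g i) ≤ -1 := ⟨k, hk⟩
  set t := Nat.find hex with htdef
  have ht : (∑ i ∈ Finset.range t, g i) ≤ -1 := Nat.find_spec hex
  have hmin : ∀ l < t, -1 < (∑ i ∈ Finset.range l, g i) := by
    intro l hl
    have := Nat.find_min hex hl
    push_neg at this
    exact this
  have htk : t ≤ k := Nat.find_min' hex hk
  have ht0 : t ≠ 0 := by
    intro h
    rw [h] at ht
    simp at ht
  obtain ⟨u, hu⟩ := Nat.exists_eq_succ_of_ne_zero ht0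
  have hu1 : -1 < ∑ i ∈ Finset.range u, g i := hmin u (by omega)
  have hsum : (∑ i ∈ Finset.range t, g i) = (∑ i ∈ Finset.range u, g i) + g u := by
    rw [hu, Finset.sum_range_succ]
  have := hg u
  refine ⟨t, htk, le_antisymm ht (by linarith), hmin⟩

lemma psum_eq (r k : ℕ) (hk : k ≤ r) (f : ℕ → ℤ) :
    (∑ i : Fin r, if (i : ℕ) < k then f i else 0) = ∑ i ∈ Finset.range k, f i := by
  rw [Fin.sum_univ_eq_sum_range (fun i => if i < k then f i else 0) r, ← Finset.sum_filter]
  congr 1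
  ext a
  simp only [Finset.mem_filter, Finset.mem_range]
  omega

lemma psum_meas (r k : ℕ) :
    Measurable (fun g : Fin r → ℤ => ∑ i : Fin r, if (i : ℕ) < k then g i else 0) := by
  apply Finset.measurable_sum
  intro i _
  by_cases h : (i : ℕ) < k
  · simpa [h] using measurable_pi_apply i
  · simpa [h] using measurable_const

lemma blockLaw {Ω : Type} [MeasureSpace Ω] [IsProbabilityMeasure (ℙ : Measure Ω)]
    (ξ : ℕ → Ω → ℤ) (hmeas : ∀ i, Measurable (ξ i))
    (hindep : iIndepFun ξ ℙ)
    (hident : ∀ i, Measure.map (ξ i) ℙ = Measure.map (ξ 0) ℙ)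
    (t r : ℕ) :
    Measure.map (fun ω (i : Fin r) => ξ (t + i) ω) ℙ
      = Measure.pi (fun _ : Fin r => Measure.map (ξ 0) ℙ) := by
  classical
  haveI hprob : IsProbabilityMeasure (Measure.map (ξ 0) ℙ) :=
    Measure.isProbabilityMeasure_map (hmeas 0).aemeasurable
  have hYmeas : Measurable (fun ω (i : Fin r) => ξ (t + i) ω) :=
    measurable_pi_lambda _ (fun i => hmeas (t + i))
  refine (Measure.pi_eq ?_).symm
  intro s hs
  rw [Measure.map_apply hYmeas (MeasurableSet.univ_pi hs)]
  set sets : ℕ → Set ℤ := fun m =>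
    if h : t ≤ m ∧ m - t < r then s ⟨m - t, h.2⟩ else Set.univ with hsets
  have hseteq : ∀ i : Fin r, sets (t + i) = s i := by
    intro i
    have h1 : t ≤ t + (i : ℕ) ∧ (t + (i : ℕ)) - t < r :=
      ⟨Nat.le_add_right _ _, by simp [i.2]⟩
    have h2 : (⟨(t + (i : ℕ)) - t, h1.2⟩ : Fin r) = i := Fin.ext (by simp)
    rw [hsets]
    simp only [dif_pos h1]
    exact congrArg s h2
  have hpre : (fun ω (i : Fin r) => ξ (t + i) ω) ⁻¹' Set.pi Set.univ s
      = ⋂ m ∈ Finset.image (fun i : Fin r => t + (i : ℕ)) Finset.univ, ξ m ⁻¹' sets m := by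
    ext ω
    simp only [Set.mem_preimage, Set.mem_pi, Set.mem_univ, forall_true_left, Set.mem_iInter,
      Finset.mem_image, Finset.mem_univ, true_and]
    constructor
    · rintro h m ⟨i, rfl⟩
      rw [hseteq i]
      exact h i
    · intro h i
      have := h (t + i) ⟨i, rfl⟩
      rwa [hseteq i] at this
  rw [hpre]
  rw [hindep.measure_inter_preimage_eq_mul _ (fun m _ => ?_)]
  · rw [Finset.prod_image (fun i _ j _ h => by
      have : (i : ℕ) = j := by omega
      exact Fin.ext this)]
    refine Finset.prod_congr rfl fun i _ => ?_
    rw [hseteq i, ← Measure.map_apply (hmeas (t + i)) (hs i), hident (t + i)]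
  · rw [hsets]
    by_cases h : t ≤ m ∧ m - t < r
    · simpa only [dif_pos h] using hs _
    · simp only [dif_neg h]
      exact MeasurableSet.univ

lemma blockIndep {Ω : Type} [MeasureSpace Ω] [IsProbabilityMeasure (ℙ : Measure Ω)]
    (ξ : ℕ → Ω → ℤ) (hmeas : ∀ i, Measurable (ξ i))
    (hindep : iIndepFun ξ ℙ)
    (t r : ℕ) (Bx : Set (Fin t → ℤ)) (By : Set (Fin r → ℤ))
    (hBx : MeasurableSet Bx) (hBy : MeasurableSet By) :
    ℙ ((fun ω (i : Fin t) => ξ i ω) ⁻¹' Bx ∩ (fun ω (i : Fin r) => ξ (t + i) ω) ⁻¹' By)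
      = ℙ ((fun ω (i : Fin t) => ξ i ω) ⁻¹' Bx)
        * ℙ ((fun ω (i : Fin r) => ξ (t + i) ω) ⁻¹' By) := by
  classical
  have hdisj : Disjoint (Finset.range t) (Finset.Ico t (t + r)) := by
    simp only [Finset.disjoint_left, Finset.mem_range, Finset.mem_Ico]
    omega
  have h1 := hindep.indepFun_finset (Finset.range t) (Finset.Ico t (t + r)) hdisj hmeas
  have hφ : Measurable (fun (g : {x // x ∈ Finset.range t} → ℤ) (i : Fin t) =>
      g ⟨(i : ℕ), Finset.mem_range.mpr i.2⟩) :=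
    measurable_pi_lambda _ (fun i => measurable_pi_apply _)
  have hψ : Measurable (fun (g : {x // x ∈ Finset.Ico t (t + r)} → ℤ) (i : Fin r) =>
      g ⟨t + (i : ℕ), Finset.mem_Ico.mpr ⟨Nat.le_add_right _ _, by omega⟩⟩) :=
    measurable_pi_lambda _ (fun i => measurable_pi_apply _)
  have h2 := h1.comp hφ hψ
  exact h2.measure_inter_preimage_eq_mul Bx By hBx hBy

lemma step_lemma {Ω : Type} [MeasureSpace Ω] [IsProbabilityMeasure (ℙ : Measure Ω)]
    (ξ : ℕ → Ω → ℤ) (hmeas : ∀ i, Measurable (ξ i))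
    (hindep : iIndepFun ξ ℙ)
    (hident : ∀ i, Measure.map (ξ i) ℙ = Measure.map (ξ 0) ℙ)
    (hstep : ∀ i, ∀ᵐ ω ∂ℙ, -1 ≤ ξ i ω)
    (n j : ℕ) :
    ℙ {ω | ∃ k ≤ n, (∑ i ∈ Finset.range k, ξ i ω) ≤ -((j : ℤ) + 1)}
      ≤ ℙ {ω | ∃ k ≤ n, (∑ i ∈ Finset.range k, ξ i ω) ≤ -1}
        * ℙ {ω | ∃ k ≤ n, (∑ i ∈ Finset.range k, ξ i ω) ≤ -(j : ℤ)} := by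
  classical
  -- the "good" event where all steps are ≥ -1
  set G : Set Ω := {ω | ∀ i, -1 ≤ ξ i ω} with hGdef
  have hGc : ℙ Gᶜ = 0 := by
    have : Gᶜ ⊆ ⋃ i, {ω | ¬ (-1 ≤ ξ i ω)} := by
      intro ω hω
      simp only [hGdef, Set.mem_compl_iff, Set.mem_setOf_eq, not_forall] at hω
      obtain ⟨i, hi⟩ := hω
      exact Set.mem_iUnion.mpr ⟨i, hi⟩
    refine measure_mono_null this (measure_iUnion_null fun i => ?_)
    exact (hstep i)
  -- the sets Bx (first hit of -1 at time t) and By (drop by j within given horizon)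
  set Bx : (t : ℕ) → Set (Fin t → ℤ) := fun t =>
    {g | (∑ i : Fin t, if (i : ℕ) < t then g i else 0) = -1 ∧
      ∀ l < t, (∑ i : Fin t, if (i : ℕ) < l then g i else 0) ≠ -1} with hBxdef
  set By : (r : ℕ) → Set (Fin r → ℤ) := fun r =>
    {g | ∃ k ≤ r, (∑ i : Fin r, if (i : ℕ) < k then g i else 0) ≤ -(j : ℤ)} with hBydef
  have hBxmeas : ∀ t, MeasurableSet (Bx t) := by
    intro t
    have h1 : Bx t = (fun g : Fin t → ℤ => ∑ i : Fin t, if (i : ℕ) < t then g i else 0) ⁻¹' {-1}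
        ∩ ⋂ l ∈ Set.Iio t,
          ((fun g : Fin t → ℤ => ∑ i : Fin t, if (i : ℕ) < l then g i else 0) ⁻¹' {-1})ᶜ := by
      ext g
      simp [hBxdef, Set.mem_iInter]
    rw [h1]
    exact ((psum_meas t t) (measurableSet_singleton _)).inter
      (MeasurableSet.biInter (Set.to_countable _)
        fun l _ => ((psum_meas t l) (measurableSet_singleton _)).compl)
  have hBymeas : ∀ r, MeasurableSet (By r) := by
    intro r
    have h1 : By r = ⋃ k ∈ Set.Iic r,
        (fun g : Fin r → ℤ => ∑ i : Fin r, if (i : ℕ) < k then g i else 0) ⁻¹' Set.Iic (-(j:ℤ)) := by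
      ext g
      simp [hBydef, Set.mem_iUnion]
    rw [h1]
    exact MeasurableSet.biUnion (Set.to_countable _)
      fun k _ => (psum_meas r k) measurableSet_Iic
  -- E t and F t as preimages
  set X : (t : ℕ) → Ω → (Fin t → ℤ) := fun t ω i => ξ i ω with hXdef
  set Y : (t r : ℕ) → Ω → (Fin r → ℤ) := fun t r ω i => ξ (t + i) ω with hYdef
  set E : ℕ → Set Ω := fun t => X t ⁻¹' Bx t with hEdef
  set F : ℕ → Set Ω := fun t => Y t (n - t) ⁻¹' By (n - t) with hFdef
  have hXmeas : ∀ t, Measurable (X t) := fun t => measurable_pi_lambda _ fun i => hmeas i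
  have hYmeas : ∀ t r, Measurable (Y t r) := fun t r => measurable_pi_lambda _ fun i => hmeas _
  -- membership descriptions
  have hEmem : ∀ t ω, ω ∈ E t ↔ ((∑ i ∈ Finset.range t, ξ i ω) = -1 ∧
      ∀ l < t, (∑ i ∈ Finset.range l, ξ i ω) ≠ -1) := by
    intro t ω
    simp only [hEdef, Set.mem_preimage, hBxdef, Set.mem_setOf_eq, hXdef]
    rw [psum_eq t t le_rfl (fun m => ξ m ω)]
    constructor
    · rintro ⟨h1, h2⟩
      refine ⟨h1, fun l hl => ?_⟩
      have := h2 l hl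
      rwa [psum_eq t l (le_of_lt hl) (fun m => ξ m ω)] at this
    · rintro ⟨h1, h2⟩
      refine ⟨h1, fun l hl => ?_⟩
      rw [psum_eq t l (le_of_lt hl) (fun m => ξ m ω)]
      exact h2 l hl
  have hYmem : ∀ t r ω, ω ∈ Y t r ⁻¹' By r ↔
      ∃ k ≤ r, (∑ i ∈ Finset.Ico t (t + k), ξ i ω) ≤ -(j:ℤ) := by
    intro t r ω
    simp only [Set.mem_preimage, hBydef, Set.mem_setOf_eq, hYdef]
    constructor
    · rintro ⟨k, hk, h⟩
      refine ⟨k, hk, ?_⟩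
      rw [psum_eq r k hk (fun m => ξ (t + m) ω)] at h
      rwa [Finset.sum_Ico_eq_sum_range, Nat.add_sub_cancel_left]
    · rintro ⟨k, hk, h⟩
      refine ⟨k, hk, ?_⟩
      rw [psum_eq r k hk (fun m => ξ (t + m) ω)]
      rwa [Finset.sum_Ico_eq_sum_range, Nat.add_sub_cancel_left] at h
  have hFmem : ∀ t ω, ω ∈ F t ↔ ∃ k ≤ n - t, (∑ i ∈ Finset.Ico t (t + k), ξ i ω) ≤ -(j:ℤ) :=
    fun t ω => hYmem t (n - t) ω
  -- inclusion in the union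
  have hsub : {ω | ∃ k ≤ n, (∑ i ∈ Finset.range k, ξ i ω) ≤ -((j : ℤ) + 1)} ∩ G
      ⊆ ⋃ t ∈ Finset.range (n + 1), (E t ∩ F t) := by
    rintro ω ⟨hω, hωG⟩
    obtain ⟨k, hkn, hk⟩ := hω
    have hk1 : (∑ i ∈ Finset.range k, ξ i ω) ≤ -1 := by
      have : (0 : ℤ) ≤ j := Int.ofNat_nonneg j
      linarith
    obtain ⟨t, htk, ht, hmin⟩ := firstHit (fun i => ξ i ω) hωG k hk1
    have htmem : t ∈ Finset.range (n + 1) := Finset.mem_range.mpr (by omega)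
    refine Set.mem_biUnion htmem ⟨?_, ?_⟩
    · rw [hEmem]
      exact ⟨ht, fun l hl => ne_of_gt (hmin l hl)⟩
    · rw [hFmem]
      refine ⟨k - t, by omega, ?_⟩
      have htk' : t + (k - t) = k := by omega
      rw [htk', Finset.sum_Ico_eq_sub _ htk, ht]
      linarith
  -- the union bound and independence
  have hEF : ∀ t, ℙ (E t ∩ F t) = ℙ (E t) * ℙ (F t) := by
    intro t
    exact blockIndep ξ hmeas hindep t (n - t) (Bx t) (By (n - t)) (hBxmeas t) (hBymeas (n - t))
  -- law of F t
  have hFlaw : ∀ t, ℙ (F t) ≤ ℙ {ω | ∃ k ≤ n, (∑ i ∈ Finset.range k, ξ i ω) ≤ -(j : ℤ)} := by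
    intro t
    have h1 : ℙ (F t) = Measure.map (Y t (n - t)) ℙ (By (n - t)) :=
      (Measure.map_apply (hYmeas t (n - t)) (hBymeas (n - t))).symm
    have h2 : Measure.map (Y 0 (n - t)) ℙ (By (n - t)) = ℙ (Y 0 (n - t) ⁻¹' By (n - t)) :=
      Measure.map_apply (hYmeas 0 (n - t)) (hBymeas (n - t))
    have h3 : Measure.map (Y t (n - t)) ℙ (By (n - t))
        = Measure.map (Y 0 (n - t)) ℙ (By (n - t)) := by
      rw [hYdef]
      rw [blockLaw ξ hmeas hindep hident t (n - t), blockLaw ξ hmeas hindep hident 0 (n - t)]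
    rw [h1, h3, h2]
    refine measure_mono ?_
    intro ω hω
    rw [hYmem 0 (n - t) ω] at hω
    obtain ⟨k, hk, h⟩ := hω
    refine ⟨k, by omega, ?_⟩
    have : Finset.Ico 0 (0 + k) = Finset.range k := by
      rw [Nat.zero_add, Finset.range_eq_Ico]
    rwa [this] at h
  -- E's are pairwise disjoint and contained in D1
  have hEdisj : (↑(Finset.range (n + 1)) : Set ℕ).Pairwise (Function.onFun Disjoint E) := by
    intro t _ t' _ htt'
    rcases lt_or_gt_of_ne htt' with h | h
    · refine Set.disjoint_left.mpr fun ω hωt hωt' => ?_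
      rw [hEmem] at hωt hωt'
      exact hωt'.2 t h hωt.1
    · refine Set.disjoint_left.mpr fun ω hωt hωt' => ?_
      rw [hEmem] at hωt hωt'
      exact hωt.2 t' h hωt'.1
  have hEmeasSet : ∀ t, MeasurableSet (E t) := fun t => (hXmeas t) (hBxmeas t)
  have hFmeasSet : ∀ t, MeasurableSet (F t) := fun t => (hYmeas t (n - t)) (hBymeas (n - t))
  have hEsub : (⋃ t ∈ Finset.range (n + 1), E t)
      ⊆ {ω | ∃ k ≤ n, (∑ i ∈ Finset.range k, ξ i ω) ≤ -1} := by
    intro ω hω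
    obtain ⟨t, ht, hωt⟩ := Set.mem_iUnion₂.mp hω
    rw [hEmem] at hωt
    exact ⟨t, by simpa using Nat.lt_succ_iff.mp (Finset.mem_range.mp ht), le_of_eq hωt.1⟩
  -- put everything together
  calc ℙ {ω | ∃ k ≤ n, (∑ i ∈ Finset.range k, ξ i ω) ≤ -((j : ℤ) + 1)}
      ≤ ℙ (({ω | ∃ k ≤ n, (∑ i ∈ Finset.range k, ξ i ω) ≤ -((j : ℤ) + 1)} ∩ G) ∪ Gᶜ) := by
        refine measure_mono fun ω hω => ?_
        by_cases h : ω ∈ G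
        · exact Or.inl ⟨hω, h⟩
        · exact Or.inr h
    _ ≤ ℙ ({ω | ∃ k ≤ n, (∑ i ∈ Finset.range k, ξ i ω) ≤ -((j : ℤ) + 1)} ∩ G) + ℙ Gᶜ :=
        measure_union_le _ _
    _ = ℙ ({ω | ∃ k ≤ n, (∑ i ∈ Finset.range k, ξ i ω) ≤ -((j : ℤ) + 1)} ∩ G) := by
        rw [hGc, add_zero]
    _ ≤ ℙ (⋃ t ∈ Finset.range (n + 1), (E t ∩ F t)) := measure_mono hsub
    _ ≤ ∑ t ∈ Finset.range (n + 1), ℙ (E t ∩ F t) := measure_biUnion_finset_le _ _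
    _ = ∑ t ∈ Finset.range (n + 1), ℙ (E t) * ℙ (F t) := Finset.sum_congr rfl fun t _ => hEF t
    _ ≤ ∑ t ∈ Finset.range (n + 1),
          ℙ (E t) * ℙ {ω | ∃ k ≤ n, (∑ i ∈ Finset.range k, ξ i ω) ≤ -(j : ℤ)} :=
        Finset.sum_le_sum fun t _ => mul_le_mul_right (hFlaw t) _
    _ = (∑ t ∈ Finset.range (n + 1), ℙ (E t))
          * ℙ {ω | ∃ k ≤ n, (∑ i ∈ Finset.range k, ξ i ω) ≤ -(j : ℤ)} := by
        rw [Finset.sum_mul]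
    _ ≤ ℙ {ω | ∃ k ≤ n, (∑ i ∈ Finset.range k, ξ i ω) ≤ -1}
          * ℙ {ω | ∃ k ≤ n, (∑ i ∈ Finset.range k, ξ i ω) ≤ -(j : ℤ)} := by
        refine mul_le_mul_left ?_ _
        rw [← measure_biUnion_finset hEdisj fun t _ => hEmeasSet t]
        exact measure_mono hEsub

lemma key_lemma {Ω : Type} [MeasureSpace Ω] [IsProbabilityMeasure (ℙ : Measure Ω)]
    (ξ : ℕ → Ω → ℤ) (hmeas : ∀ i, Measurable (ξ i))
    (hindep : iIndepFun ξ ℙ)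
    (hident : ∀ i, Measure.map (ξ i) ℙ = Measure.map (ξ 0) ℙ)
    (hstep : ∀ i, ∀ᵐ ω ∂ℙ, -1 ≤ ξ i ω)
    (n j : ℕ) :
    ℙ {ω | ∃ k ≤ n, (∑ i ∈ Finset.range k, ξ i ω) ≤ -(j : ℤ)}
      ≤ (ℙ {ω | ∃ k ≤ n, (∑ i ∈ Finset.range k, ξ i ω) ≤ -1}) ^ j := by
  induction j with
  | zero => simpa using prob_le_one
  | succ j ih =>
    have h1 := step_lemma ξ hmeas hindep hident hstep n j
    have h2 : -((j + 1 : ℕ) : ℤ) = -((j : ℤ) + 1) := by push_cast; ring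
    rw [h2]
    calc ℙ {ω | ∃ k ≤ n, (∑ i ∈ Finset.range k, ξ i ω) ≤ -((j : ℤ) + 1)}
        ≤ ℙ {ω | ∃ k ≤ n, (∑ i ∈ Finset.range k, ξ i ω) ≤ -1}
          * ℙ {ω | ∃ k ≤ n, (∑ i ∈ Finset.range k, ξ i ω) ≤ -(j : ℤ)} := h1
      _ ≤ ℙ {ω | ∃ k ≤ n, (∑ i ∈ Finset.range k, ξ i ω) ≤ -1}
          * (ℙ {ω | ∃ k ≤ n, (∑ i ∈ Finset.range k, ξ i ω) ≤ -1}) ^ j :=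
          mul_le_mul_right ih _
      _ = (ℙ {ω | ∃ k ≤ n, (∑ i ∈ Finset.range k, ξ i ω) ≤ -1}) ^ (j + 1) := by
          rw [pow_succ, mul_comm]

/-- For a random walk with i.i.d. integer steps bounded below by `-1`,
if `ℙ(V > n) ≥ K' · n^{-1/α}` for all `n ≥ 1`, where `V = inf{n ≥ 0 : S_n = -1}` and
`K' ∈ (0,1]`, then for every `n ≥ 1` and every real `x ≥ 1`,
`ℙ(-J_n ≥ x · n^{1/α}) ≤ exp(-K' x / 2)`, where `J_n = min_{0 ≤ k ≤ n} S_k`. -/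
theorem stmt_5
    (α : ℝ) (hα₁ : 1 < α) (hα₂ : α < 2)
    (Ω : Type) [MeasureSpace Ω] [IsProbabilityMeasure (ℙ : Measure Ω)]
    (ξ : ℕ → Ω → ℤ) (hmeas : ∀ i, Measurable (ξ i))
    (hindep : iIndepFun ξ ℙ)
    (hident : ∀ i, Measure.map (ξ i) ℙ = Measure.map (ξ 0) ℙ)
    (hstep : ∀ i, ∀ᵐ ω ∂ℙ, -1 ≤ ξ i ω)
    (S : ℕ → Ω → ℤ) (hS : ∀ n ω, S n ω = ∑ i ∈ Finset.range n, ξ i ω)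
    (J : ℕ → Ω → ℤ)
    (hJ : ∀ n ω, J n ω = (Finset.range (n + 1)).inf' (by simp) (fun k => S k ω))
    (K' : ℝ) (hK'₀ : 0 < K') (hK'₁ : K' ≤ 1)
    (hV : ∀ n : ℕ, 1 ≤ n →
      ENNReal.ofReal (K' * (n : ℝ) ^ (-(1 / α))) ≤
        ℙ {ω | ∀ k : ℕ, k ≤ n → S k ω ≠ -1}) :
    ∀ n : ℕ, 1 ≤ n → ∀ x : ℝ, 1 ≤ x →
      ℙ {ω | x * (n : ℝ) ^ (1 / α) ≤ -(J n ω : ℝ)} ≤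
        ENNReal.ofReal (Real.exp (-K' * x / 2)) := by
  intro n hn x hx
  classical
  have hα₀ : 0 < α := by linarith
  have hnR : (1 : ℝ) ≤ (n : ℝ) := by exact_mod_cast hn
  have hnpos : (0 : ℝ) < (n : ℝ) := by linarith
  set c : ℝ := K' * (n : ℝ) ^ (-(1 / α)) with hcdef
  have hrpow_pos : (0 : ℝ) < (n : ℝ) ^ (-(1 / α)) := Real.rpow_pos_of_pos hnpos _
  have hrpow_le : (n : ℝ) ^ (-(1 / α)) ≤ 1 := by
    rw [Real.rpow_le_one_iff_of_pos hnpos]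
    left
    exact ⟨hnR, by rw [neg_nonpos]; positivity⟩
  have hc0 : 0 < c := mul_pos hK'₀ hrpow_pos
  have hc1 : c ≤ 1 := by
    calc c ≤ K' * 1 := mul_le_mul_of_nonneg_left hrpow_le (le_of_lt hK'₀)
      _ = K' := mul_one _
      _ ≤ 1 := hK'₁
  -- the good event
  set G : Set Ω := {ω | ∀ i, -1 ≤ ξ i ω} with hGdef
  have hGc : ℙ Gᶜ = 0 := by
    have hsub : Gᶜ ⊆ ⋃ i, {ω | ¬ (-1 ≤ ξ i ω)} := by
      intro ω hω
      simp only [hGdef, Set.mem_compl_iff, Set.mem_setOf_eq, not_forall] at hω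
      obtain ⟨i, hi⟩ := hω
      exact Set.mem_iUnion.mpr ⟨i, hi⟩
    exact measure_mono_null hsub (measure_iUnion_null fun i => hstep i)
  -- base bound : ℙ(D 1) ≤ ofReal (1 - c)
  set D1 : Set Ω := {ω | ∃ k ≤ n, (∑ i ∈ Finset.range k, ξ i ω) ≤ -1} with hD1def
  set N : Set Ω := {ω | ∀ k : ℕ, k ≤ n → S k ω ≠ -1} with hNdef
  have hD1N : D1 ∩ N ⊆ Gᶜ := by
    intro ω ⟨hω1, hω2⟩
    by_contra hωG
    simp only [Set.mem_compl_iff, not_not] at hωG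
    obtain ⟨k, hkn, hk⟩ := hω1
    obtain ⟨t, htk, ht, -⟩ := firstHit (fun i => ξ i ω) hωG k hk
    exact hω2 t (le_trans htk hkn) (by rw [hS]; exact ht)
  have hNmeas : MeasurableSet N := by
    have h1 : N = ⋂ k ∈ Set.Iic n, ((fun ω => S k ω) ⁻¹' {(-1 : ℤ)})ᶜ := by
      ext ω
      simp [hNdef, Set.mem_iInter]
    rw [h1]
    refine MeasurableSet.biInter (Set.to_countable _) fun k _ => ?_
    have hSk : Measurable (S k) := by
      have h2 : S k = fun ω => ∑ i ∈ Finset.range k, ξ i ω := funext fun ω => hS k ω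
      rw [h2]
      exact Finset.measurable_sum _ fun i _ => hmeas i
    exact (hSk (measurableSet_singleton _)).compl
  have hD1bound : ℙ D1 ≤ ENNReal.ofReal (1 - c) := by
    have hint : ℙ (D1 ∩ N) = 0 := measure_mono_null hD1N hGc
    have hsum : ℙ D1 + ℙ N ≤ 1 := by
      rw [← measure_union_add_inter D1 hNmeas, hint, add_zero]
      exact prob_le_one
    have h2 : ℙ D1 ≤ 1 - ℙ N :=
      ENNReal.le_sub_of_add_le_right (measure_ne_top _ _) hsum
    refine le_trans h2 ?_
    have h3 : (1 : ENNReal) - ℙ N ≤ 1 - ENNReal.ofReal c :=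
      tsub_le_tsub_left (hV n hn) 1
    refine le_trans h3 (le_of_eq ?_)
    rw [ENNReal.ofReal_sub 1 (le_of_lt hc0), ENNReal.ofReal_one]
  -- the ceiling
  set y : ℝ := x * (n : ℝ) ^ (1 / α) with hydef
  have hrpow1 : (1 : ℝ) ≤ (n : ℝ) ^ (1 / α) := by
    calc (1 : ℝ) = (1 : ℝ) ^ (1 / α) := (Real.one_rpow _).symm
      _ ≤ (n : ℝ) ^ (1 / α) := Real.rpow_le_rpow zero_le_one hnR (by positivity)
  have hy1 : 1 ≤ y := by nlinarith
  have hceil : (1 : ℤ) ≤ ⌈y⌉ := by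
    rw [Int.le_ceil_iff]
    norm_num
    linarith
  set m : ℕ := (⌈y⌉).toNat with hmdef
  have hmZ : (m : ℤ) = ⌈y⌉ := Int.toNat_of_nonneg (by omega)
  have hmy : y ≤ (m : ℝ) := by
    have := Int.le_ceil y
    rw [← hmZ] at this
    exact_mod_cast this
  -- inclusion of the target event
  have hsub : {ω | x * (n : ℝ) ^ (1 / α) ≤ -(J n ω : ℝ)}
      ⊆ {ω | ∃ k ≤ n, (∑ i ∈ Finset.range k, ξ i ω) ≤ -(m : ℤ)} := by
    intro ω hω
    have hω' : y ≤ -(J n ω : ℝ) := hω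
    have h1 : (m : ℤ) ≤ -(J n ω) := by
      rw [hmZ]
      refine Int.ceil_le.mpr ?_
      push_cast
      exact hω'
    obtain ⟨k, hk, heq⟩ := Finset.exists_mem_eq_inf' (s := Finset.range (n + 1))
      (by simp) (fun k => S k ω)
    refine ⟨k, Nat.lt_succ_iff.mp (Finset.mem_range.mp hk), ?_⟩
    have hJk : J n ω = S k ω := by rw [hJ]; exact heq
    rw [← hS]
    rw [← hJk]
    omega
  -- conclusion
  calc ℙ {ω | x * (n : ℝ) ^ (1 / α) ≤ -(J n ω : ℝ)}
      ≤ ℙ {ω | ∃ k ≤ n, (∑ i ∈ Finset.range k, ξ i ω) ≤ -(m : ℤ)} := measure_mono hsub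
    _ ≤ (ℙ D1) ^ m := key_lemma ξ hmeas hindep hident hstep n m
    _ ≤ (ENNReal.ofReal (1 - c)) ^ m := pow_le_pow_left' hD1bound m
    _ = ENNReal.ofReal ((1 - c) ^ m) := (ENNReal.ofReal_pow (by linarith) m).symm
    _ ≤ ENNReal.ofReal (Real.exp (-K' * x / 2)) := by
      refine ENNReal.ofReal_le_ofReal ?_
      have h1 : (1 - c) ^ m ≤ Real.exp (-c) ^ m := by
        refine pow_le_pow_left₀ (by linarith) ?_ m
        have := Real.add_one_le_exp (-c)
        linarith
      have h2 : Real.exp (-c) ^ m = Real.exp (-(c * m)) := by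
        rw [← Real.exp_nat_mul]
        ring_nf
      have h3 : K' * x ≤ c * m := by
        have hcm : c * y ≤ c * m := mul_le_mul_of_nonneg_left hmy (le_of_lt hc0)
        have hcy : c * y = K' * x := by
          rw [hcdef, hydef]
          have : (n : ℝ) ^ (-(1 / α)) * (n : ℝ) ^ (1 / α) = 1 := by
            rw [← Real.rpow_add hnpos]
            norm_num
          rw [show K' * (n:ℝ)^(-(1/α)) * (x * (n:ℝ)^(1/α))
              = K' * x * ((n:ℝ)^(-(1/α)) * (n:ℝ)^(1/α)) from by ring, this, mul_one]
        linarith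
      have h4 : Real.exp (-(c * m)) ≤ Real.exp (-K' * x / 2) := by
        refine Real.exp_le_exp.mpr ?_
        nlinarith [mul_pos hK'₀ (lt_of_lt_of_le one_pos hx)]
      calc (1 - c) ^ m ≤ Real.exp (-c) ^ m := h1
        _ = Real.exp (-(c * m)) := h2
        _ ≤ Real.exp (-K' * x / 2) := h4
end

section
/- Fix δ ∈ (0, 1/(2α)) and η > 0, and set M = V_1 + ⋯ + V_U (with M = 0 if U = 0). Then n · ℙ( M ≥ η·n^{1/α} and V_i ≤ M − n^{(1/α)−δ} for every i ∈ {1,…,U} ) → 0 as n → ∞. In other words, with probability 1 − o(1/n), if the random sum M exceeds η·n^{1/α} then some single summand V_i exceeds M − n^{(1/α)−δ}. -/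
open MeasureTheory ProbabilityTheory Filter

/-- Let `U` be geometric with parameter `β`, let `(V_i)` be identically
distributed `ℕ`-valued random variables with `ℙ(V_1 ≥ k) ≤ K·k^{-α}`, the family
`U, V_1, V_2, …` being independent, and set `M = V_1 + ⋯ + V_U`. For fixed
`δ ∈ (0, 1/(2α))` and `η > 0`,
`n · ℙ(M ≥ η·n^{1/α} and V_i ≤ M - n^{1/α - δ} for every i ≤ U) → 0` as `n → ∞`. -/
theorem stmt_9
    (β : ℝ) (hβ₀ : 0 < β) (hβ₁ : β < 1)
    (α : ℝ) (hα₁ : 1 < α) (hα₂ : α < 2)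
    (Ω : Type) [MeasureSpace Ω] [IsProbabilityMeasure (ℙ : Measure Ω)]
    (U : Ω → ℕ) (hUmeas : Measurable U)
    (V : ℕ → Ω → ℕ) (hVmeas : ∀ i, Measurable (V i))
    (hindep : iIndepFun
      (fun o : Option ℕ => Option.elim o U V) ℙ)
    (hident : ∀ i, Measure.map (V i) ℙ = Measure.map (V 0) ℙ)
    (hU : ∀ k : ℕ, ℙ {ω | U ω = k} = ENNReal.ofReal (β * (1 - β) ^ k))
    (K : ℝ) (hK : ∀ k : ℕ, 1 ≤ k →
      ℙ {ω | k ≤ V 0 ω} ≤ ENNReal.ofReal (K * (k : ℝ) ^ (-α)))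
    (M : Ω → ℕ) (hM : ∀ ω, M ω = ∑ i ∈ Finset.range (U ω), V i ω)
    (δ : ℝ) (hδ₀ : 0 < δ) (hδ₁ : δ < 1 / (2 * α))
    (η : ℝ) (hη : 0 < η) :
    Tendsto (fun n : ℕ => (n : ℝ) *
        (ℙ {ω | η * (n : ℝ) ^ (1 / α) ≤ (M ω : ℝ) ∧
            ∀ i : ℕ, i < U ω → (V i ω : ℝ) ≤ (M ω : ℝ) - (n : ℝ) ^ (1 / α - δ)}).toReal)
      atTop (nhds 0) := by
  have hα0 : (0:ℝ) < α := by linarith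
  set r : ℝ := 1 - β with hr_def
  have hr0 : 0 < r := by rw [hr_def]; linarith
  have hr1 : r < 1 := by rw [hr_def]; linarith
  have hlogr : Real.log r < 0 := Real.log_neg hr0 hr1
  set K' : ℝ := max K 1 with hK'_def
  have hK'1 : (1:ℝ) ≤ K' := le_max_right _ _
  have hK'0 : (0:ℝ) < K' := lt_of_lt_of_le one_pos hK'1
  have hK' : ∀ k : ℕ, 1 ≤ k → ℙ {ω | k ≤ V 0 ω} ≤ ENNReal.ofReal (K' * (k:ℝ) ^ (-α)) := by
    intro k hk
    refine (hK k hk).trans (ENNReal.ofReal_le_ofReal ?_)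
    have hkpos : (0:ℝ) ≤ (k:ℝ) ^ (-α) := Real.rpow_nonneg (by positivity) _
    exact mul_le_mul_of_nonneg_right (le_max_left _ _) hkpos
  -- tail bound for U
  have hUtail : ∀ m : ℕ, ℙ {ω | m ≤ U ω} ≤ ENNReal.ofReal (r ^ m) := by
    intro m
    have hset : {ω | m ≤ U ω} = ⋃ k : ℕ, {ω | U ω = m + k} := by
      ext ω
      simp only [Set.mem_setOf_eq, Set.mem_iUnion]
      constructor
      · intro h; exact ⟨U ω - m, by omega⟩
      · rintro ⟨k, hk⟩; omega
    rw [hset]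
    refine (measure_iUnion_le _).trans ?_
    simp_rw [hU]
    have hsummable : Summable (fun k : ℕ => β * r ^ (m + k)) := by
      simp_rw [pow_add, ← mul_assoc]
      exact (summable_geometric_of_lt_one hr0.le hr1).mul_left _
    rw [← ENNReal.ofReal_tsum_of_nonneg (fun k => by positivity) hsummable]
    refine ENNReal.ofReal_le_ofReal (le_of_eq ?_)
    have htsum : ∑' k : ℕ, β * r ^ (m + k) = β * r ^ m * (1 - r)⁻¹ := by
      simp_rw [pow_add, ← mul_assoc]
      rw [tsum_mul_left, tsum_geometric_of_lt_one hr0.le hr1]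
    rw [htsum]
    have hb : 1 - r = β := by rw [hr_def]; ring
    rw [hb]
    field_simp
  -- pairwise independence bound
  have hpair : ∀ i j : ℕ, i ≠ j → ∀ a b : ℕ,
      ℙ ({ω | a ≤ V i ω} ∩ {ω | b ≤ V j ω})
        = ℙ {ω | a ≤ V 0 ω} * ℙ {ω | b ≤ V 0 ω} := by
    intro i j hij a b
    have hind : IndepFun (V i) (V j) ℙ := by
      have h := hindep.indepFun (i := some i) (j := some j) (by simpa using hij)
      simpa using h
    have hm : ∀ (t : ℕ) (d : ℕ), ℙ (V t ⁻¹' Set.Ici d) = ℙ {ω | d ≤ V 0 ω} := by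
      intro t d
      have : ℙ (V t ⁻¹' Set.Ici d) = Measure.map (V t) ℙ (Set.Ici d) :=
        (Measure.map_apply (hVmeas t) measurableSet_Ici).symm
      rw [this, hident t, Measure.map_apply (hVmeas 0) measurableSet_Ici]
      rfl
    have h1 : {ω | a ≤ V i ω} = V i ⁻¹' Set.Ici a := rfl
    have h2 : {ω | b ≤ V j ω} = V j ⁻¹' Set.Ici b := rfl
    rw [h1, h2, hind.measure_inter_preimage_eq_mul _ _ measurableSet_Ici measurableSet_Ici,
      hm i a, hm j b]
  -- constants
  have hαδ : α * δ < 1/2 := by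
    have h1 : α * δ < α * (1 / (2 * α)) := mul_lt_mul_of_pos_left hδ₁ hα0
    have h2 : α * (1 / (2 * α)) = 1/2 := by field_simp
    linarith
  set c : ℝ := 1 - α * δ with hc_def
  have hc0 : 0 < c := by rw [hc_def]; linarith
  set s : ℝ := c / (2 * (2 + 2 * α)) with hs_def
  have hs0 : 0 < s := div_pos hc0 (by linarith)
  set C : ℝ := 3 / (-Real.log r) with hC_def
  have hC0 : 0 < C := div_pos three_pos (by linarith)
  set D : ℝ := K' ^ 2 * η ^ (-α) with hD_def
  have hD0 : 0 ≤ D := by positivity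
  set u : ℕ → ℕ := fun n => ⌈C * Real.log n⌉₊ + 1 with hu_def
  -- eventual bound over ℝ
  have hF2 : ∀ᶠ x : ℝ in atTop, C * Real.log x + 2 ≤ x ^ s := by
    have h1 := Asymptotics.IsLittleO.def (isLittleO_log_rpow_atTop hs0) (c := 1 / (2 * (C + 1))) (by positivity)
    have h2 : ∀ᶠ x : ℝ in atTop, (4:ℝ) ≤ x ^ s := (tendsto_rpow_atTop hs0).eventually_ge_atTop 4
    filter_upwards [h1, h2, eventually_ge_atTop (1:ℝ)] with x hx1 hx2 hx3
    have hlx : 0 ≤ Real.log x := Real.log_nonneg hx3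
    have hxs : 0 ≤ x ^ s := by positivity
    rw [Real.norm_eq_abs, Real.norm_eq_abs, abs_of_nonneg hlx, abs_of_nonneg hxs] at hx1
    have hx1' : Real.log x * (2 * (C + 1)) ≤ x ^ s := by
      rw [← le_div_iff₀ (by positivity)] at *
      calc Real.log x ≤ 1 / (2 * (C + 1)) * x ^ s := hx1
        _ = x ^ s / (2 * (C + 1)) := by ring
    nlinarith [mul_nonneg hC0.le hlx]
  set E : ℕ → Set Ω := fun n => {ω | η * (n : ℝ) ^ (1 / α) ≤ (M ω : ℝ) ∧
      ∀ i : ℕ, i < U ω → (V i ω : ℝ) ≤ (M ω : ℝ) - (n : ℝ) ^ (1 / α - δ)} with hE_def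
  have key : ∀ᶠ n : ℕ in atTop,
      (n:ℝ) * (ℙ (E n)).toReal ≤ (n:ℝ) ^ (-2:ℝ) + D * (n:ℝ) ^ (-(c/2)) := by
    filter_upwards [eventually_ge_atTop 1, tendsto_natCast_atTop_atTop.eventually hF2]
      with n hn1 hn2
    have hn0 : (0:ℝ) < n := by exact_mod_cast hn1
    have hun1 : 1 ≤ u n := Nat.le_add_left 1 _
    have hun0 : (0:ℝ) < (u n : ℝ) := by exact_mod_cast hun1
    set T1 : ℝ := η * (n:ℝ) ^ (1/α) with hT1_def
    set T2 : ℝ := (n:ℝ) ^ (1/α - δ) with hT2_def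
    have hT1pos : 0 < T1 := mul_pos hη (Real.rpow_pos_of_pos hn0 _)
    have hT2pos : 0 < T2 := Real.rpow_pos_of_pos hn0 _
    set a : ℕ := ⌈T1 / u n⌉₊ with ha_def
    set b : ℕ := ⌈T2 / u n⌉₊ with hb_def
    have ha1 : 1 ≤ a := Nat.ceil_pos.mpr (div_pos hT1pos hun0)
    have hb1 : 1 ≤ b := Nat.ceil_pos.mpr (div_pos hT2pos hun0)
    -- deterministic inclusion
    have hsub : E n ⊆ {ω | u n ≤ U ω} ∪
        ⋃ q ∈ (Finset.range (u n)).offDiag,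
          ({ω | a ≤ V q.1 ω} ∩ {ω | b ≤ V q.2 ω}) := by
      rintro ω ⟨hω1, hω2⟩
      by_cases hcase : u n ≤ U ω
      · exact Or.inl hcase
      push_neg at hcase
      right
      have hNu : (U ω : ℝ) ≤ (u n : ℝ) := by exact_mod_cast hcase.le
      have hMω : (M ω : ℝ) = ∑ i ∈ Finset.range (U ω), (V i ω : ℝ) := by
        rw [hM ω]; push_cast; rfl
      have hMpos : (0:ℝ) < M ω := lt_of_lt_of_le hT1pos hω1
      have hNne : (Finset.range (U ω)).Nonempty := by
        rw [Finset.nonempty_range_iff]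
        intro h
        rw [hMω, h, Finset.range_zero, Finset.sum_empty] at hMpos
        exact lt_irrefl _ hMpos
      obtain ⟨i0, hi0mem, hi0max⟩ := Finset.exists_max_image (Finset.range (U ω))
        (fun i => V i ω) hNne
      have hi0N : i0 < U ω := Finset.mem_range.mp hi0mem
      have hsum_le : (M ω : ℝ) ≤ (u n : ℝ) * (V i0 ω : ℝ) := by
        rw [hMω]
        calc ∑ i ∈ Finset.range (U ω), (V i ω : ℝ)
            ≤ ∑ _i ∈ Finset.range (U ω), (V i0 ω : ℝ) :=
              Finset.sum_le_sum (fun i hi => by exact_mod_cast hi0max i hi)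
          _ = (U ω : ℝ) * (V i0 ω : ℝ) := by
              rw [Finset.sum_const, Finset.card_range, nsmul_eq_mul]
          _ ≤ (u n : ℝ) * (V i0 ω : ℝ) :=
              mul_le_mul_of_nonneg_right hNu (by positivity)
      have ha_le : a ≤ V i0 ω := by
        rw [ha_def, Nat.ceil_le, div_le_iff₀ hun0]
        calc T1 ≤ (M ω : ℝ) := hω1
          _ ≤ (u n : ℝ) * (V i0 ω : ℝ) := hsum_le
          _ = (V i0 ω : ℝ) * (u n : ℝ) := by ring
      set S := (Finset.range (U ω)).erase i0 with hS_def
      have hSsum : ∑ i ∈ S, (V i ω : ℝ) = (M ω : ℝ) - (V i0 ω : ℝ) := by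
        rw [hMω, ← Finset.add_sum_erase _ _ hi0mem]; ring
      have hT2le : T2 ≤ ∑ i ∈ S, (V i ω : ℝ) := by
        rw [hSsum]
        have := hω2 i0 hi0N
        linarith
      have hSne : S.Nonempty := by
        by_contra h
        rw [Finset.not_nonempty_iff_eq_empty] at h
        rw [h, Finset.sum_empty] at hT2le
        linarith
      obtain ⟨j0, hj0mem, hj0max⟩ := Finset.exists_max_image S (fun i => V i ω) hSne
      have hj0i0 : j0 ≠ i0 := Finset.ne_of_mem_erase hj0mem
      have hj0N : j0 < U ω := Finset.mem_range.mp (Finset.mem_of_mem_erase hj0mem)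
      have hb_le : b ≤ V j0 ω := by
        rw [hb_def, Nat.ceil_le, div_le_iff₀ hun0]
        have hcard : (S.card : ℝ) ≤ (u n : ℝ) := by
          have h1 : S.card ≤ U ω := le_trans (Finset.card_erase_le)
            (le_of_eq (Finset.card_range _))
          exact le_trans (by exact_mod_cast h1) hNu
        calc T2 ≤ ∑ i ∈ S, (V i ω : ℝ) := hT2le
          _ ≤ ∑ _i ∈ S, (V j0 ω : ℝ) :=
              Finset.sum_le_sum (fun i hi => by exact_mod_cast hj0max i hi)
          _ = (S.card : ℝ) * (V j0 ω : ℝ) := by rw [Finset.sum_const, nsmul_eq_mul]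
          _ ≤ (V j0 ω : ℝ) * (u n : ℝ) := by
              rw [mul_comm]
              exact mul_le_mul_of_nonneg_left hcard (by positivity)
      refine Set.mem_iUnion.mpr ⟨((i0, j0) : ℕ × ℕ), Set.mem_iUnion.mpr ⟨?_, ha_le, hb_le⟩⟩
      rw [Finset.mem_offDiag]
      exact ⟨Finset.mem_range.mpr (lt_trans hi0N hcase),
        Finset.mem_range.mpr (lt_trans hj0N hcase), Ne.symm hj0i0⟩
    -- measure bound
    have hone : ∀ q ∈ (Finset.range (u n)).offDiag,
        ℙ ({ω | a ≤ V q.1 ω} ∩ {ω | b ≤ V q.2 ω})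
          ≤ ENNReal.ofReal (K' * (a:ℝ) ^ (-α)) * ENNReal.ofReal (K' * (b:ℝ) ^ (-α)) := by
      intro q hq
      have hne : q.1 ≠ q.2 := (Finset.mem_offDiag.mp hq).2.2
      rw [hpair q.1 q.2 hne a b]
      exact mul_le_mul' (hK' a ha1) (hK' b hb1)
    have hmeasb : ℙ (E n) ≤ ENNReal.ofReal (r ^ u n)
        + ((u n : ENNReal) * (u n : ENNReal)) *
          (ENNReal.ofReal (K' * (a:ℝ) ^ (-α)) * ENNReal.ofReal (K' * (b:ℝ) ^ (-α))) := by
      refine le_trans (measure_mono hsub) (le_trans (measure_union_le _ _) ?_)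
      refine add_le_add (hUtail (u n)) ?_
      refine le_trans (measure_biUnion_finset_le _ _) ?_
      refine le_trans (Finset.sum_le_card_nsmul _ _ _ hone) ?_
      rw [nsmul_eq_mul]
      refine mul_le_mul_left ?_ _
      have hcard : ((Finset.range (u n)).offDiag.card : ENNReal)
          ≤ ((u n * u n : ℕ) : ENNReal) := by
        refine Nat.cast_le.mpr ?_
        rw [Finset.offDiag_card, Finset.card_range]
        omega
      refine le_trans hcard (le_of_eq ?_)
      push_cast; ring
    have hX1 : (0:ℝ) ≤ K' * (a:ℝ) ^ (-α) :=
      mul_nonneg hK'0.le (Real.rpow_nonneg (Nat.cast_nonneg _) _)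
    have hX2 : (0:ℝ) ≤ K' * (b:ℝ) ^ (-α) :=
      mul_nonneg hK'0.le (Real.rpow_nonneg (Nat.cast_nonneg _) _)
    have hfin2 : ((u n : ENNReal) * (u n : ENNReal)) *
          (ENNReal.ofReal (K' * (a:ℝ) ^ (-α)) * ENNReal.ofReal (K' * (b:ℝ) ^ (-α))) ≠ ⊤ :=
      ENNReal.mul_ne_top
        (ENNReal.mul_ne_top (ENNReal.natCast_ne_top _) (ENNReal.natCast_ne_top _))
        (ENNReal.mul_ne_top ENNReal.ofReal_ne_top ENNReal.ofReal_ne_top)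
    have htoReal : (ℙ (E n)).toReal ≤ r ^ u n
        + (u n : ℝ) * (u n : ℝ) * ((K' * (a:ℝ) ^ (-α)) * (K' * (b:ℝ) ^ (-α))) := by
      refine le_trans (ENNReal.toReal_mono
        (ENNReal.add_ne_top.mpr ⟨ENNReal.ofReal_ne_top, hfin2⟩) hmeasb) (le_of_eq ?_)
      rw [ENNReal.toReal_add ENNReal.ofReal_ne_top hfin2]
      simp only [ENNReal.toReal_mul]
      rw [ENNReal.toReal_ofReal (by positivity), ENNReal.toReal_ofReal hX1,
        ENNReal.toReal_ofReal hX2, ENNReal.toReal_natCast]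
    -- real estimates
    have haα : (a:ℝ) ^ (-α) ≤ (T1 / (u n:ℝ)) ^ (-α) := by
      refine Real.rpow_le_rpow_of_nonpos (div_pos hT1pos hun0) ?_ (by linarith)
      rw [ha_def]; exact Nat.le_ceil _
    have hbα : (b:ℝ) ^ (-α) ≤ (T2 / (u n:ℝ)) ^ (-α) := by
      refine Real.rpow_le_rpow_of_nonpos (div_pos hT2pos hun0) ?_ (by linarith)
      rw [hb_def]; exact Nat.le_ceil _
    have hexp1 : (1/α) * (-α) = (-1 : ℝ) := by field_simp
    have hexp2 : (1/α - δ) * (-α) = -c := by rw [hc_def]; field_simp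
    have hT1α : (T1 / (u n:ℝ)) ^ (-α) = η ^ (-α) * (n:ℝ) ^ (-1:ℝ) * (u n:ℝ) ^ α := by
      rw [hT1_def, Real.div_rpow (by positivity) hun0.le,
        Real.mul_rpow hη.le (by positivity),
        ← Real.rpow_mul (Nat.cast_nonneg n), hexp1,
        Real.rpow_neg hun0.le, div_inv_eq_mul]
    have hT2α : (T2 / (u n:ℝ)) ^ (-α) = (n:ℝ) ^ (-c) * (u n:ℝ) ^ α := by
      rw [hT2_def, Real.div_rpow (by positivity) hun0.le,
        ← Real.rpow_mul (Nat.cast_nonneg n), hexp2,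
        Real.rpow_neg hun0.le, div_inv_eq_mul]
    have hupow : (u n:ℝ) ^ ((2:ℝ) + 2*α)
        = (u n:ℝ) * (u n:ℝ) * ((u n:ℝ) ^ α * (u n:ℝ) ^ α) := by
      rw [Real.rpow_add hun0, two_mul, Real.rpow_add hun0]
      rw [show (2:ℝ) = ((2:ℕ):ℝ) by norm_num, Real.rpow_natCast]
      ring
    -- bound A : geometric part
    have hA : (n:ℝ) * r ^ u n ≤ (n:ℝ) ^ (-2:ℝ) := by
      have h1 : (r:ℝ) ^ (u n) ≤ (n:ℝ) ^ (-3:ℝ) := by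
        have e1 : (r:ℝ) ^ (u n) = r ^ ((u n : ℕ):ℝ) := (Real.rpow_natCast r (u n)).symm
        have h2 : r ^ ((u n : ℕ):ℝ) ≤ r ^ (C * Real.log n) := by
          apply Real.rpow_le_rpow_of_exponent_ge hr0 hr1.le
          calc C * Real.log n ≤ (⌈C * Real.log n⌉₊ : ℝ) := Nat.le_ceil _
            _ ≤ (u n : ℝ) := by rw [hu_def]; push_cast; linarith
        have h3 : r ^ (C * Real.log n) = (n:ℝ) ^ (-3:ℝ) := by
          rw [Real.rpow_def_of_pos hr0, Real.rpow_def_of_pos hn0]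
          congr 1
          have hCr : C * Real.log r = -3 := by
            rw [hC_def]; field_simp [hlogr.ne]
          calc Real.log r * (C * Real.log n) = (C * Real.log r) * Real.log n := by ring
            _ = Real.log n * (-3) := by rw [hCr]; ring
        rw [e1]; exact h2.trans (le_of_eq h3)
      calc (n:ℝ) * r ^ u n ≤ (n:ℝ) * (n:ℝ) ^ (-3:ℝ) := mul_le_mul_of_nonneg_left h1 hn0.le
        _ = (n:ℝ) ^ (-2:ℝ) := by
            nth_rewrite 1 [← Real.rpow_one (n:ℝ)]
            rw [← Real.rpow_add hn0]; norm_num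
    -- bound B : power part
    have hlogn : 0 ≤ Real.log n := Real.log_nonneg (by exact_mod_cast hn1)
    have hun_le : (u n : ℝ) ≤ (n:ℝ) ^ s := by
      have h1 : ((u n : ℕ):ℝ) ≤ C * Real.log n + 2 := by
        rw [hu_def]; push_cast
        have := Nat.ceil_lt_add_one (R := ℝ) (a := C * Real.log n) (by positivity)
        linarith
      exact h1.trans hn2
    have hupow_le : (u n:ℝ) ^ ((2:ℝ)+2*α) ≤ (n:ℝ) ^ (c/2) := by
      have h1 : (u n:ℝ) ^ ((2:ℝ)+2*α) ≤ ((n:ℝ) ^ s) ^ ((2:ℝ)+2*α) :=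
        Real.rpow_le_rpow hun0.le hun_le (by linarith)
      have h2 : ((n:ℝ) ^ s) ^ ((2:ℝ)+2*α) = (n:ℝ) ^ (c/2) := by
        rw [← Real.rpow_mul (Nat.cast_nonneg n)]
        congr 1
        rw [hs_def]; field_simp
      linarith
    have hB : (n:ℝ) * (D * (u n:ℝ) ^ ((2:ℝ)+2*α) * ((n:ℝ) ^ (-1:ℝ) * (n:ℝ) ^ (-c)))
        ≤ D * (n:ℝ) ^ (-(c/2)) := by
      have hnn1 : (n:ℝ) * (n:ℝ) ^ (-1:ℝ) = 1 := by
        rw [Real.rpow_neg_one]; field_simp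
      calc (n:ℝ) * (D * (u n:ℝ) ^ ((2:ℝ)+2*α) * ((n:ℝ) ^ (-1:ℝ) * (n:ℝ) ^ (-c)))
          = D * (u n:ℝ) ^ ((2:ℝ)+2*α) * (((n:ℝ) * (n:ℝ) ^ (-1:ℝ)) * (n:ℝ) ^ (-c)) := by ring
        _ = D * (u n:ℝ) ^ ((2:ℝ)+2*α) * (n:ℝ) ^ (-c) := by rw [hnn1]; ring
        _ ≤ D * (n:ℝ) ^ (c/2) * (n:ℝ) ^ (-c) := by
            refine mul_le_mul_of_nonneg_right (mul_le_mul_of_nonneg_left hupow_le hD0)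
              (Real.rpow_nonneg (Nat.cast_nonneg n) _)
        _ = D * (n:ℝ) ^ (-(c/2)) := by
            rw [mul_assoc, ← Real.rpow_add hn0]
            congr 2
            ring
    -- assemble
    calc (n:ℝ) * (ℙ (E n)).toReal
        ≤ (n:ℝ) * (r ^ u n + (u n:ℝ) * (u n:ℝ) * ((K' * (a:ℝ) ^ (-α)) * (K' * (b:ℝ) ^ (-α)))) :=
          mul_le_mul_of_nonneg_left htoReal hn0.le
      _ = (n:ℝ) * r ^ u n
          + (n:ℝ) * ((u n:ℝ) * (u n:ℝ) * ((K' * (a:ℝ) ^ (-α)) * (K' * (b:ℝ) ^ (-α)))) := by ring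
      _ ≤ (n:ℝ) ^ (-2:ℝ) + D * (n:ℝ) ^ (-(c/2)) := by
          refine add_le_add hA (le_trans (mul_le_mul_of_nonneg_left ?_ hn0.le) hB)
          calc (u n:ℝ) * (u n:ℝ) * ((K' * (a:ℝ) ^ (-α)) * (K' * (b:ℝ) ^ (-α)))
              ≤ (u n:ℝ) * (u n:ℝ)
                * ((K' * (T1/(u n:ℝ)) ^ (-α)) * (K' * (T2/(u n:ℝ)) ^ (-α))) := by
                refine mul_le_mul_of_nonneg_left ?_ (by positivity)
                refine mul_le_mul (mul_le_mul_of_nonneg_left haα hK'0.le)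
                  (mul_le_mul_of_nonneg_left hbα hK'0.le) hX2
                  (mul_nonneg hK'0.le (Real.rpow_nonneg (div_pos hT1pos hun0).le _))
            _ = D * (u n:ℝ) ^ ((2:ℝ)+2*α) * ((n:ℝ) ^ (-1:ℝ) * (n:ℝ) ^ (-c)) := by
                rw [hT1α, hT2α, hD_def, hupow]; ring


  have hlim : Tendsto (fun n : ℕ => (n:ℝ) ^ (-2:ℝ) + D * (n:ℝ) ^ (-(c/2))) atTop (nhds 0) := by
    have l1 : Tendsto (fun n : ℕ => (n:ℝ) ^ (-2:ℝ)) atTop (nhds 0) :=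
      (tendsto_rpow_neg_atTop two_pos).comp tendsto_natCast_atTop_atTop
    have l2 : Tendsto (fun n : ℕ => (n:ℝ) ^ (-(c/2))) atTop (nhds 0) :=
      (tendsto_rpow_neg_atTop (by linarith)).comp tendsto_natCast_atTop_atTop
    have := l1.add ((l2.const_mul D))
    simpa using this
  refine squeeze_zero' ?_ key hlim
  filter_upwards with n
  positivity
end

section
/- For every k the tail sum μ̄₁(k) = ∑_{j≥k} μ₁(j) is finite, and as k → ∞, k^α · μ̄₁(k) converges to 2c/(α·(1−β)·√π); that is, μ̄₁(k) ~ (2c/(α(1−β)√π)) · k^{−α}. -/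
open Filter
open Real

lemma aux_diff_bounds (s : ℝ) (hs : 0 < s) (x : ℝ) (hx : 1 ≤ x) :
    s * (x + 1) ^ (-(s + 1)) ≤ x ^ (-s) - (x + 1) ^ (-s) ∧
      x ^ (-s) - (x + 1) ^ (-s) ≤ s * x ^ (-(s + 1)) := by
  have hx0 : (0:ℝ) < x := lt_of_lt_of_le one_pos hx
  have hx1 : (0:ℝ) < x + 1 := by linarith
  have hcont : ContinuousOn (fun t : ℝ => t ^ (-s)) (Set.Icc x (x + 1)) := by
    apply ContinuousOn.rpow_const continuousOn_id
    intro t ht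
    exact Or.inl (by nlinarith [ht.1] : t ≠ 0)
  have hderiv : ∀ t ∈ Set.Ioo x (x + 1),
      HasDerivAt (fun t : ℝ => t ^ (-s)) (-s * t ^ (-s - 1)) t := by
    intro t ht
    exact Real.hasDerivAt_rpow_const (Or.inl (by nlinarith [ht.1] : t ≠ 0))
  obtain ⟨ξ, hξ, hslope⟩ := exists_hasDerivAt_eq_slope (fun t : ℝ => t ^ (-s))
    (fun t => -s * t ^ (-s - 1)) (by linarith : x < x + 1) hcont hderiv
  have hξ0 : 0 < ξ := lt_trans hx0 hξ.1
  have hkey : x ^ (-s) - (x + 1) ^ (-s) = s * ξ ^ (-(s + 1)) := by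
    have : -s * ξ ^ (-s - 1) = ((x+1) ^ (-s) - x ^ (-s)) / (x + 1 - x) := hslope
    have h2 : (x + 1 - x) = 1 := by ring
    rw [h2, div_one] at this
    have h3 : -s - 1 = -(s+1) := by ring
    rw [h3] at this
    linarith [this]
  constructor
  · rw [hkey]
    apply mul_le_mul_of_nonneg_left _ hs.le
    rw [Real.rpow_neg hx1.le, Real.rpow_neg hξ0.le]
    apply inv_anti₀ (Real.rpow_pos_of_pos hξ0 _)
    exact Real.rpow_le_rpow hξ0.le hξ.2.le (by linarith)
  · rw [hkey]
    apply mul_le_mul_of_nonneg_left _ hs.le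
    rw [Real.rpow_neg hx0.le, Real.rpow_neg hξ0.le]
    apply inv_anti₀ (Real.rpow_pos_of_pos hx0 _)
    exact Real.rpow_le_rpow hx0.le hξ.1.le (by linarith)

lemma aux_summable_shift (r : ℝ) (hr : r < -1) (k : ℕ) :
    Summable (fun j : ℕ => ((k + j : ℕ) : ℝ) ^ r) := by
  have h : Summable (fun n : ℕ => (n : ℝ) ^ r) := Real.summable_nat_rpow.2 hr
  have := (summable_nat_add_iff k).2 h
  simpa [add_comm] using this

lemma aux_tel (s : ℝ) (hs : 0 < s) (k : ℕ) (hk : 1 ≤ k) :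
    HasSum (fun j : ℕ => ((k + j : ℕ) : ℝ) ^ (-s) - ((k + j + 1 : ℕ) : ℝ) ^ (-s))
      ((k : ℝ) ^ (-s)) := by
  have hnonneg : ∀ j : ℕ, 0 ≤ ((k + j : ℕ) : ℝ) ^ (-s) - ((k + j + 1 : ℕ) : ℝ) ^ (-s) := by
    intro j
    have hx : (1:ℝ) ≤ ((k + j : ℕ) : ℝ) := by exact_mod_cast Nat.le_add_right_of_le hk
    have h := (aux_diff_bounds s hs _ hx).1
    have hc : ((k + j + 1 : ℕ) : ℝ) = ((k + j : ℕ) : ℝ) + 1 := by push_cast; ring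
    rw [hc]
    have hpos : 0 < s * (((k + j : ℕ) : ℝ) + 1) ^ (-(s+1)) :=
      mul_pos hs (Real.rpow_pos_of_pos (by linarith) _)
    linarith
  rw [hasSum_iff_tendsto_nat_of_nonneg hnonneg]
  have hps : ∀ n : ℕ, ∑ i ∈ Finset.range n,
      (((k + i : ℕ) : ℝ) ^ (-s) - ((k + i + 1 : ℕ) : ℝ) ^ (-s))
      = (k : ℝ) ^ (-s) - ((k + n : ℕ) : ℝ) ^ (-s) := by
    intro n
    have := Finset.sum_range_sub' (fun i => ((k + i : ℕ) : ℝ) ^ (-s)) n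
    simpa [add_assoc] using this
  simp only [hps]
  have h0 : Tendsto (fun n : ℕ => ((k + n : ℕ) : ℝ) ^ (-s)) atTop (nhds 0) := by
    have h1 : Tendsto (fun n : ℕ => ((k + n : ℕ) : ℝ)) atTop atTop := by
      apply tendsto_natCast_atTop_atTop.comp
      simpa [add_comm] using tendsto_add_atTop_nat k
    exact (tendsto_rpow_neg_atTop hs).comp h1
  simpa using tendsto_const_nhds.sub h0

lemma aux_S_lower (s : ℝ) (hs : 0 < s) (k : ℕ) (hk : 1 ≤ k) :
    (k : ℝ) ^ (-s) ≤ s * ∑' j : ℕ, ((k + j : ℕ) : ℝ) ^ (-(s + 1)) := by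
  have hsum : Summable (fun j : ℕ => ((k + j : ℕ) : ℝ) ^ (-(s+1))) :=
    aux_summable_shift _ (by linarith) k
  have htel := aux_tel s hs k hk
  rw [← htel.tsum_eq, ← tsum_mul_left]
  apply Summable.tsum_le_tsum _ htel.summable (hsum.mul_left s)
  intro j
  have hx : (1:ℝ) ≤ ((k + j : ℕ) : ℝ) := by exact_mod_cast Nat.le_add_right_of_le hk
  have hc : ((k + j + 1 : ℕ) : ℝ) = ((k + j : ℕ) : ℝ) + 1 := by push_cast; ring
  rw [hc]
  exact (aux_diff_bounds s hs _ hx).2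

lemma aux_S_upper (s : ℝ) (hs : 0 < s) (k : ℕ) (hk : 1 ≤ k) :
    s * ∑' j : ℕ, ((k + 1 + j : ℕ) : ℝ) ^ (-(s + 1)) ≤ (k : ℝ) ^ (-s) := by
  have hsum : Summable (fun j : ℕ => ((k + 1 + j : ℕ) : ℝ) ^ (-(s+1))) :=
    aux_summable_shift _ (by linarith) (k+1)
  have htel := aux_tel s hs k hk
  rw [← htel.tsum_eq, ← tsum_mul_left]
  apply Summable.tsum_le_tsum _ (hsum.mul_left s) htel.summable
  intro j
  have hx : (1:ℝ) ≤ ((k + j : ℕ) : ℝ) := by exact_mod_cast Nat.le_add_right_of_le hk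
  have hc : ((k + j + 1 : ℕ) : ℝ) = ((k + j : ℕ) : ℝ) + 1 := by push_cast; ring
  have hc2 : ((k + 1 + j : ℕ) : ℝ) = ((k + j : ℕ) : ℝ) + 1 := by push_cast; ring
  rw [hc, hc2]
  exact (aux_diff_bounds s hs _ hx).1

lemma aux_S_tendsto (s : ℝ) (hs : 0 < s) :
    Tendsto (fun k : ℕ => (k : ℝ) ^ s * ∑' j : ℕ, ((k + j : ℕ) : ℝ) ^ (-(s + 1))) atTop
      (nhds (1 / s)) := by
  rw [← tendsto_add_atTop_iff_nat 1]
  have hupper : Tendsto (fun m : ℕ => (1 + 1 / (m:ℝ)) ^ s / s) atTop (nhds (1 / s)) := by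
    have h1 : Tendsto (fun m : ℕ => 1 + 1 / (m:ℝ)) atTop (nhds 1) := by
      simpa using tendsto_const_nhds.add (tendsto_one_div_atTop_nhds_zero_nat : Tendsto (fun n : ℕ => 1 / (n:ℝ)) atTop (nhds 0))
    have := (h1.rpow_const (Or.inr hs.le)).div_const s
    simpa using this
  apply tendsto_of_tendsto_of_tendsto_of_le_of_le' tendsto_const_nhds hupper
  · filter_upwards [eventually_ge_atTop 1] with m hm
    have hm0 : (0:ℝ) < (m:ℝ) + 1 := by positivity
    have h := aux_S_lower s hs (m + 1) (by omega)
    have hpow : ((m + 1 : ℕ) : ℝ) ^ s * ((m + 1 : ℕ) : ℝ) ^ (-s) = 1 := by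
      rw [← Real.rpow_add (by exact_mod_cast hm0)]; simp
    calc 1 / s = (1 / s) * (((m + 1 : ℕ):ℝ) ^ s * ((m + 1 : ℕ):ℝ) ^ (-s)) := by rw [hpow]; ring
      _ ≤ (1 / s) * (((m + 1 : ℕ):ℝ) ^ s * (s * ∑' j : ℕ, ((m + 1 + j : ℕ) : ℝ) ^ (-(s + 1)))) := by
          apply mul_le_mul_of_nonneg_left _ (by positivity)
          exact mul_le_mul_of_nonneg_left h (Real.rpow_nonneg (by positivity) s)
      _ = ((m + 1 : ℕ):ℝ) ^ s * ∑' j : ℕ, ((m + 1 + j : ℕ) : ℝ) ^ (-(s + 1)) := by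
          field_simp
  · filter_upwards [eventually_ge_atTop 1] with m hm
    have hm0 : (0:ℝ) < (m:ℝ) := by exact_mod_cast hm
    have h := aux_S_upper s hs m hm
    have heq : (1 + 1 / (m:ℝ)) ^ s = ((m + 1 : ℕ):ℝ) ^ s * (m:ℝ) ^ (-s) := by
      rw [Real.rpow_neg hm0.le, show (1 + 1/(m:ℝ)) = ((m+1:ℕ):ℝ) / (m:ℝ) by push_cast; field_simp,
        Real.div_rpow (by positivity) hm0.le]
      ring
    rw [div_eq_mul_one_div, heq]
    have hS : ∑' j : ℕ, ((m + 1 + j : ℕ) : ℝ) ^ (-(s + 1)) ≤ (1/s) * (m:ℝ) ^ (-s) := by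
      rw [← mul_le_mul_iff_right₀ hs]
      calc s * ∑' j : ℕ, ((m + 1 + j : ℕ) : ℝ) ^ (-(s + 1)) ≤ (m:ℝ) ^ (-s) := h
        _ = s * ((1/s) * (m:ℝ) ^ (-s)) := by field_simp
    calc ((m + 1 : ℕ):ℝ) ^ s * ∑' j : ℕ, ((m + 1 + j : ℕ) : ℝ) ^ (-(s + 1))
        ≤ ((m + 1 : ℕ):ℝ) ^ s * ((1/s) * (m:ℝ) ^ (-s)) :=
          mul_le_mul_of_nonneg_left hS (Real.rpow_nonneg (by positivity) s)
      _ = ((m + 1 : ℕ):ℝ) ^ s * (m:ℝ) ^ (-s) * (1/s) := by ring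

lemma aux_cb_eq (n : ℕ) (hn : 1 ≤ n) :
    Stirling.stirlingSeq (2 * n) =
      (Real.sqrt n * (1 / 4 : ℝ) ^ n * n.centralBinom) * Stirling.stirlingSeq n ^ 2 := by
  have hn0 : (0:ℝ) < (n:ℝ) := by exact_mod_cast hn
  have hE : (0:ℝ) < Real.exp 1 := Real.exp_pos 1
  have hfact : (n.centralBinom : ℝ) * (n.factorial : ℝ) * (n.factorial : ℝ) = ((2 * n).factorial : ℝ) := by
    have h := Nat.choose_mul_factorial_mul_factorial (show n ≤ 2 * n by omega)
    rw [show 2 * n - n = n by omega] at h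
    rw [Nat.centralBinom]
    exact_mod_cast h
  unfold Stirling.stirlingSeq
  have h4 : Real.sqrt (2 * (2 * n : ℕ) : ℝ) = 2 * Real.sqrt n := by
    push_cast
    rw [show (2:ℝ) * (2 * n) = 4 * n by ring, show (4:ℝ) = 2^2 by norm_num,
      Real.sqrt_mul (by positivity), Real.sqrt_sq (by norm_num : (0:ℝ) ≤ 2)]
  rw [h4]
  have hpow : (((2 * n : ℕ) : ℝ) / Real.exp 1) ^ (2 * n) = 4 ^ n * (((n:ℝ) / Real.exp 1) ^ n) ^ 2 := by
    push_cast
    rw [pow_mul]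
    rw [show ((2 * (n:ℝ)) / Real.exp 1) ^ 2 = 4 * ((n:ℝ) / Real.exp 1) ^ 2 by field_simp; ring,
      mul_pow, ← pow_mul, mul_comm 2 n, pow_mul]
  rw [hpow]
  have hA : (0:ℝ) < ((n:ℝ) / Real.exp 1) ^ n := by positivity
  have hsn : (0:ℝ) < Real.sqrt n := Real.sqrt_pos.2 hn0
  have hs2 : Real.sqrt (2 * n : ℝ) * Real.sqrt (2 * n : ℝ) = 2 * n := by
    rw [Real.mul_self_sqrt (by positivity)]
  have hnn : Real.sqrt (n:ℝ) * Real.sqrt (n:ℝ) = (n:ℝ) := Real.mul_self_sqrt hn0.le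
  have h14 : (1/4 : ℝ)^n * 4^n = 1 := by
    rw [← mul_pow]; norm_num
  field_simp
  rw [Real.sq_sqrt (by positivity : (0:ℝ) ≤ 2 * (n:ℝ)), Real.sq_sqrt hn0.le]
  linear_combination (-(2 * (n:ℝ))) * hfact +
    (-(2 * (n:ℝ) * (n.centralBinom:ℝ) * ((n.factorial:ℝ))^2)) * h14

lemma aux_cb_tendsto :
    Tendsto (fun n : ℕ => Real.sqrt n * (1 / 4 : ℝ) ^ n * n.centralBinom) atTop
      (nhds (1 / Real.sqrt Real.pi)) := by
  have hst := Stirling.tendsto_stirlingSeq_sqrt_pi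
  have h2n : Tendsto (fun n : ℕ => Stirling.stirlingSeq (2 * n)) atTop (nhds (Real.sqrt Real.pi)) :=
    hst.comp (tendsto_atTop_atTop_of_monotone (fun a b h => by omega)
      (fun b => ⟨b, by omega⟩))
  have hπ : (0:ℝ) < Real.sqrt Real.pi := Real.sqrt_pos.2 Real.pi_pos
  have hratio : Tendsto (fun n : ℕ => Stirling.stirlingSeq (2 * n) / Stirling.stirlingSeq n ^ 2)
      atTop (nhds (1 / Real.sqrt Real.pi)) := by
    have := h2n.div (hst.pow 2) (by positivity)
    convert this using 2
    · rfl
    rw [Real.sq_sqrt Real.pi_pos.le, div_eq_div_iff hπ.ne' Real.pi_pos.ne', one_mul,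
      Real.mul_self_sqrt Real.pi_pos.le]
  apply hratio.congr'
  filter_upwards [eventually_ge_atTop 1] with n hn
  have hne : Stirling.stirlingSeq n ≠ 0 := by
    obtain ⟨m, rfl⟩ := Nat.exists_eq_add_of_le hn
    rw [add_comm]
    exact (Stirling.stirlingSeq'_pos m).ne'
  rw [aux_cb_eq n hn, mul_div_assoc, div_self (pow_ne_zero 2 hne), mul_one]

lemma aux_choose_tendsto :
    Tendsto (fun k : ℕ => Real.sqrt k * (1 / 4 : ℝ) ^ k * ((2 * k + 1).choose k : ℝ)) atTop
      (nhds (2 / Real.sqrt Real.pi)) := by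
  have hchoose : ∀ k : ℕ, ((k + 1).centralBinom : ℝ) = 2 * ((2 * k + 1).choose k : ℝ) := by
    intro k
    have h1 : (k + 1).centralBinom = 2 * ((2 * k + 1).choose k) := by
      rw [Nat.centralBinom, show 2 * (k + 1) = (2 * k + 1) + 1 by ring,
        Nat.choose_succ_succ (2 * k + 1) k]
      have := Nat.choose_symm (show k + 1 ≤ 2 * k + 1 by omega)
      rw [show 2 * k + 1 - (k + 1) = k by omega] at this
      simp only [Nat.succ_eq_add_one]
      omega
    exact_mod_cast h1
  have hshift : Tendsto (fun k : ℕ =>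
      Real.sqrt (k+1) * (1 / 4 : ℝ) ^ (k+1) * ((k+1).centralBinom : ℝ)) atTop
      (nhds (1 / Real.sqrt Real.pi)) := by
    have := aux_cb_tendsto
    rw [← tendsto_add_atTop_iff_nat 1] at this
    exact this.congr (fun k => by push_cast; ring_nf)
  have hsqrt : Tendsto (fun k : ℕ => Real.sqrt k / Real.sqrt (k+1)) atTop (nhds 1) := by
    have h1 : Tendsto (fun k : ℕ => (k:ℝ) / ((k:ℝ)+1)) atTop (nhds 1) := by
      simpa using tendsto_natCast_div_add_atTop (1:ℝ)
    have h2 := h1.sqrt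
    simp only [Real.sqrt_one] at h2
    apply h2.congr
    intro k
    rw [Real.sqrt_div (by positivity : (0:ℝ) ≤ (k:ℝ))]
  have hmain := (hsqrt.mul hshift).mul_const 2
  have heq : (1:ℝ) * (1 / Real.sqrt Real.pi) * 2 = 2 / Real.sqrt Real.pi := by ring
  rw [heq] at hmain
  apply hmain.congr
  intro k
  have h1 : Real.sqrt ((k:ℝ)+1) ≠ 0 := by positivity
  rw [hchoose k]
  field_simp
  ring

set_option maxHeartbeats 1000000 in
/-- With `a ∈ (3/2, 5/2)`, `α = a - 1/2`, `q°_k ~ k^{-a}`, `c > 0`,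
`β ∈ (0,1)` and `μ₁(k) = (c/(1-β)) · 4^{-k} · binom(2k+1, k) · q°_{k+1}`, the tail sums
`μ̄₁(k) = ∑_{j ≥ k} μ₁(j)` are finite and `k^α · μ̄₁(k) → 2c/(α·(1-β)·√π)` as `k → ∞`. -/
theorem stmt_12
    (a : ℝ) (ha₁ : 3 / 2 < a) (ha₂ : a < 5 / 2)
    (α : ℝ) (hα : α = a - 1 / 2)
    (q : ℕ → ℝ) (hq : ∀ k : ℕ, 1 ≤ k → 0 ≤ q k)
    (hasymp : Tendsto (fun k : ℕ => (k : ℝ) ^ a * q k) atTop (nhds 1))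
    (c β : ℝ) (hc : 0 < c) (hβ₀ : 0 < β) (hβ₁ : β < 1)
    (μ₁ : ℕ → ℝ)
    (hμ₁ : ∀ k : ℕ, μ₁ k =
      c / (1 - β) * (1 / 4 : ℝ) ^ k * ((2 * k + 1).choose k : ℝ) * q (k + 1)) :
    (∀ k : ℕ, Summable (fun j : ℕ => μ₁ (k + j))) ∧
    Tendsto (fun k : ℕ => (k : ℝ) ^ α * ∑' j : ℕ, μ₁ (k + j)) atTop
      (nhds (2 * c / (α * (1 - β) * Real.sqrt Real.pi))) := by
  have hα1 : 1 < α := by rw [hα]; linarith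
  have hα0 : 0 < α := by linarith
  have hβ : (0:ℝ) < 1 - β := by linarith
  have hπ : (0:ℝ) < Real.sqrt Real.pi := Real.sqrt_pos.2 Real.pi_pos
  set C : ℝ := 2 * c / ((1 - β) * Real.sqrt Real.pi) with hCdef
  -- Step A : k^(α+1) * μ₁ k → C
  have hq1 : Tendsto (fun k : ℕ => (k : ℝ) ^ a * q (k + 1)) atTop (nhds 1) := by
    have h' : Tendsto (fun k : ℕ => ((k + 1 : ℕ) : ℝ) ^ a * q (k + 1)) atTop (nhds 1) :=
      (tendsto_add_atTop_iff_nat 1).2 hasymp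
    have hr : Tendsto (fun k : ℕ => ((k : ℝ) / ((k : ℝ) + 1)) ^ a) atTop (nhds 1) := by
      have := (tendsto_natCast_div_add_atTop (1:ℝ)).rpow_const (Or.inr (by linarith : (0:ℝ) ≤ a))
      simpa using this
    have := hr.mul h'
    rw [one_mul] at this
    apply this.congr
    intro k
    have h2 : (0:ℝ) < (k:ℝ) + 1 := by positivity
    have h3 : ((k:ℝ)+1) ^ a ≠ 0 := (Real.rpow_pos_of_pos h2 a).ne'
    push_cast
    rw [Real.div_rpow (Nat.cast_nonneg k) h2.le]
    field_simp
  have hA : Tendsto (fun k : ℕ => (k : ℝ) ^ (α + 1) * μ₁ k) atTop (nhds C) := by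
    have hprod := ((aux_choose_tendsto.mul hq1).const_mul (c / (1 - β)))
    have hval : c / (1 - β) * (2 / Real.sqrt Real.pi * 1) = C := by
      rw [hCdef]; field_simp
    rw [hval] at hprod
    apply hprod.congr'
    filter_upwards [eventually_ge_atTop 1] with k hk
    have hk0 : (0:ℝ) < (k:ℝ) := by exact_mod_cast hk
    have hsplit : (k : ℝ) ^ (α + 1) = (k:ℝ) ^ a * Real.sqrt k := by
      rw [Real.sqrt_eq_rpow, ← Real.rpow_add hk0]
      congr 1
      rw [hα]; ring
    rw [hμ₁ k, hsplit]
    ring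
  -- nonnegativity of μ₁
  have hμpos : ∀ k : ℕ, 0 ≤ μ₁ k := by
    intro k
    rw [hμ₁ k]
    have := hq k.succ (by omega)
    positivity
  -- eventual error bound
  have hbnd : ∀ ε : ℝ, 0 < ε → ∀ᶠ k : ℕ in atTop,
      |μ₁ k - C * (k : ℝ) ^ (-(α + 1))| ≤ ε * (k : ℝ) ^ (-(α + 1)) := by
    intro ε hε
    filter_upwards [Metric.tendsto_nhds.1 hA ε hε, eventually_ge_atTop 1] with k hdist hk
    have hk0 : (0:ℝ) < (k:ℝ) := by exact_mod_cast hk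
    have hmul : (k:ℝ) ^ (-(α+1)) * (k:ℝ) ^ (α+1) = 1 := by
      rw [← Real.rpow_add hk0, neg_add_cancel, Real.rpow_zero]
    have hfac : μ₁ k - C * (k:ℝ) ^ (-(α+1)) =
        ((k:ℝ) ^ (α+1) * μ₁ k - C) * (k:ℝ) ^ (-(α+1)) := by
      linear_combination (-(μ₁ k)) * hmul
    rw [hfac, abs_mul, abs_of_nonneg (Real.rpow_nonneg hk0.le _)]
    apply mul_le_mul_of_nonneg_right _ (Real.rpow_nonneg hk0.le _)
    rw [Real.dist_eq] at hdist
    exact hdist.le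
  -- summability
  have hsummable : Summable μ₁ := by
    apply summable_of_isBigO_nat (Real.summable_nat_rpow.2 (by linarith : -(α+1) < -1))
    rw [Asymptotics.isBigO_iff]
    refine ⟨|C| + 1, ?_⟩
    filter_upwards [hbnd 1 one_pos] with k hk
    have h0 : 0 ≤ (k:ℝ) ^ (-(α+1)) := Real.rpow_nonneg (Nat.cast_nonneg k) _
    have h1 : |μ₁ k| ≤ |μ₁ k - C * (k:ℝ) ^ (-(α+1))| + |C * (k:ℝ) ^ (-(α+1))| := by
      calc |μ₁ k| = |(μ₁ k - C * (k:ℝ) ^ (-(α+1))) + C * (k:ℝ) ^ (-(α+1))| := by ring_nf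
        _ ≤ _ := abs_add_le _ _
    rw [Real.norm_eq_abs, Real.norm_eq_abs, abs_of_nonneg h0]
    rw [abs_mul, abs_of_nonneg h0] at h1
    nlinarith [abs_nonneg (μ₁ k)]
  have hsumm : ∀ k : ℕ, Summable (fun j : ℕ => μ₁ (k + j)) := by
    intro k
    have := (summable_nat_add_iff k).2 hsummable
    simpa [add_comm] using this
  refine ⟨hsumm, ?_⟩
  -- S-asymptotics
  have hS_t : Tendsto (fun k : ℕ => (k:ℝ) ^ α * ∑' j : ℕ, ((k + j : ℕ) : ℝ) ^ (-(α + 1)))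
      atTop (nhds (1 / α)) := aux_S_tendsto α hα0
  -- difference tends to zero
  have hdiff : Tendsto (fun k : ℕ => (k:ℝ) ^ α * (∑' j : ℕ, μ₁ (k + j))
      - C * ((k:ℝ) ^ α * ∑' j : ℕ, ((k + j : ℕ) : ℝ) ^ (-(α + 1)))) atTop (nhds 0) := by
    rw [NormedAddCommGroup.tendsto_nhds_zero]
    intro ε hε
    have hδ : 0 < ε * α / 4 := by positivity
    obtain ⟨N, hN⟩ := (hbnd _ hδ).exists_forall_of_atTop
    have hSev : ∀ᶠ k : ℕ in atTop,
        (k:ℝ) ^ α * ∑' j : ℕ, ((k + j : ℕ) : ℝ) ^ (-(α + 1)) < 2 / α :=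
      hS_t.eventually_lt_const (by rw [div_lt_div_iff₀ hα0 hα0]; nlinarith)
    filter_upwards [eventually_ge_atTop N, hSev] with k hk hS2
    have hsum1 : Summable (fun j : ℕ => μ₁ (k + j)) := hsumm k
    have hsum2 : Summable (fun j : ℕ => ((k + j : ℕ) : ℝ) ^ (-(α + 1))) :=
      aux_summable_shift _ (by linarith) k
    have hSpos : 0 ≤ ∑' j : ℕ, ((k + j : ℕ) : ℝ) ^ (-(α + 1)) :=
      tsum_nonneg (fun j => Real.rpow_nonneg (Nat.cast_nonneg _) _)
    have hTS : |(∑' j : ℕ, μ₁ (k + j))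
        - C * ∑' j : ℕ, ((k + j : ℕ) : ℝ) ^ (-(α + 1))|
        ≤ (ε * α / 4) * ∑' j : ℕ, ((k + j : ℕ) : ℝ) ^ (-(α + 1)) := by
      have heq : (∑' j : ℕ, μ₁ (k + j)) - C * ∑' j : ℕ, ((k + j : ℕ) : ℝ) ^ (-(α + 1))
          = ∑' j : ℕ, (μ₁ (k + j) - C * ((k + j : ℕ) : ℝ) ^ (-(α + 1))) := by
        rw [Summable.tsum_sub hsum1 (hsum2.mul_left C), tsum_mul_left]
      rw [heq, ← tsum_mul_left]
      have habs_summ : Summable (fun j : ℕ => |μ₁ (k + j) - C * ((k + j : ℕ) : ℝ) ^ (-(α + 1))|) :=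
        (hsum1.sub (hsum2.mul_left C)).abs
      have hnorm : |∑' j : ℕ, (μ₁ (k + j) - C * ((k + j : ℕ) : ℝ) ^ (-(α + 1)))|
          ≤ ∑' j : ℕ, |μ₁ (k + j) - C * ((k + j : ℕ) : ℝ) ^ (-(α + 1))| := by
        have := norm_tsum_le_tsum_norm
          (f := fun j : ℕ => μ₁ (k + j) - C * ((k + j : ℕ) : ℝ) ^ (-(α + 1)))
          (habs_summ.congr (fun j => (Real.norm_eq_abs _).symm))
        simpa [Real.norm_eq_abs] using this
      calc |∑' j : ℕ, (μ₁ (k + j) - C * ((k + j : ℕ) : ℝ) ^ (-(α + 1)))|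
          ≤ ∑' j : ℕ, |μ₁ (k + j) - C * ((k + j : ℕ) : ℝ) ^ (-(α + 1))| := hnorm
        _ ≤ ∑' j : ℕ, (ε * α / 4) * ((k + j : ℕ) : ℝ) ^ (-(α + 1)) := by
            apply Summable.tsum_le_tsum _ habs_summ (hsum2.mul_left _)
            intro j
            exact hN (k + j) (le_trans hk (Nat.le_add_right k j))
    have hknn : 0 ≤ (k:ℝ) ^ α := Real.rpow_nonneg (Nat.cast_nonneg k) _
    calc ‖(k:ℝ) ^ α * (∑' j : ℕ, μ₁ (k + j))
        - C * ((k:ℝ) ^ α * ∑' j : ℕ, ((k + j : ℕ) : ℝ) ^ (-(α + 1)))‖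
        = (k:ℝ) ^ α * |(∑' j : ℕ, μ₁ (k + j))
            - C * ∑' j : ℕ, ((k + j : ℕ) : ℝ) ^ (-(α + 1))| := by
          rw [Real.norm_eq_abs, show (k:ℝ) ^ α * (∑' j : ℕ, μ₁ (k + j))
            - C * ((k:ℝ) ^ α * ∑' j : ℕ, ((k + j : ℕ) : ℝ) ^ (-(α + 1)))
            = (k:ℝ) ^ α * ((∑' j : ℕ, μ₁ (k + j))
              - C * ∑' j : ℕ, ((k + j : ℕ) : ℝ) ^ (-(α + 1))) by ring,
            abs_mul, abs_of_nonneg hknn]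
      _ ≤ (k:ℝ) ^ α * ((ε * α / 4) * ∑' j : ℕ, ((k + j : ℕ) : ℝ) ^ (-(α + 1))) :=
          mul_le_mul_of_nonneg_left hTS hknn
      _ = (ε * α / 4) * ((k:ℝ) ^ α * ∑' j : ℕ, ((k + j : ℕ) : ℝ) ^ (-(α + 1))) := by ring
      _ < (ε * α / 4) * (2 / α) := mul_lt_mul_of_pos_left hS2 hδ
      _ ≤ ε := by
          rw [show (ε * α / 4) * (2 / α) = ε / 2 by field_simp; ring]
          linarith
  -- conclusion
  have hfinal := hdiff.add ((hS_t.const_mul C).congr (fun k => rfl))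
  rw [zero_add] at hfinal
  have hval : C * (1 / α) = 2 * c / (α * (1 - β) * Real.sqrt Real.pi) := by
    rw [hCdef]; field_simp
  rw [hval] at hfinal
  apply hfinal.congr
  intro k
  ring
end

section
/- There exists a finite constant K such that for all integers k ≥ 1 and ℓ ≥ 1, ℙ(J_k > −ℓ) ≤ K · ℓ · k^{−1/α}, where J_k = min_{0≤j≤k} S_j. -/
open MeasureTheory ProbabilityTheory Filter

noncomputable def hfun (l m : ℕ) (z : ℤ) : ℝ := max 0 ((l : ℝ) + min (z : ℝ) ((m : ℝ) - 1))

lemma hfun_nonneg (l m : ℕ) (z : ℤ) : 0 ≤ hfun l m z := le_max_left _ _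

lemma hfun_abs_le (l m : ℕ) (hl : 1 ≤ l) (hm : 2 ≤ m) (z : ℤ) :
    |hfun l m z| ≤ (l : ℝ) + m - 1 := by
  have hl1 : (1 : ℝ) ≤ (l : ℝ) := by exact_mod_cast hl
  have hm2 : (2 : ℝ) ≤ (m : ℝ) := by exact_mod_cast hm
  rw [abs_of_nonneg (hfun_nonneg l m z)]
  unfold hfun
  apply max_le (by linarith)
  have : min (z : ℝ) ((m : ℝ) - 1) ≤ (m : ℝ) - 1 := min_le_right _ _
  linarith

lemma hfun_up (l m : ℕ) (hl : 1 ≤ l) (hm : 2 ≤ m) (z : ℤ) (hz : (m : ℤ) - 1 ≤ z) :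
    hfun l m z = (l : ℝ) + m - 1 := by
  have hl1 : (1 : ℝ) ≤ (l : ℝ) := by exact_mod_cast hl
  have hm2 : (2 : ℝ) ≤ (m : ℝ) := by exact_mod_cast hm
  have hzR : (m : ℝ) - 1 ≤ (z : ℝ) := by exact_mod_cast hz
  unfold hfun
  rw [min_eq_right hzR, max_eq_right] <;> linarith

lemma hfun_zero (l m : ℕ) (hm : 2 ≤ m) : hfun l m 0 = (l : ℝ) := by
  have hm2 : (2 : ℝ) ≤ (m : ℝ) := by exact_mod_cast hm
  unfold hfun
  push_cast
  rw [min_eq_left (by linarith), max_eq_right (by positivity)]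
  simp

noncomputable def dconst (ν : Measure ℤ) (l m : ℕ) : ℝ :=
  ∫ y : ℤ, max ((y : ℝ) - ((m : ℝ) + (l : ℝ) - 2)) 0 ∂ν

lemma my_int {α : Type*} [MeasurableSpace α] {μ : Measure α} [IsFiniteMeasure μ] {f : α → ℝ}
    (hf : AEStronglyMeasurable f μ) (c : ℝ) (hc : ∀ x, |f x| ≤ c) : Integrable f μ :=
  ⟨hf, HasFiniteIntegral.of_bounded (C := c)
    (Filter.Eventually.of_forall (by simpa [Real.norm_eq_abs] using hc))⟩

lemma exp_prefix_step {Ω : Type} [MeasureSpace Ω] [IsProbabilityMeasure (ℙ : Measure Ω)]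
    (ν : Measure ℤ) [IsProbabilityMeasure ν]
    (ξ : ℕ → Ω → ℤ) (hmeas : ∀ i, Measurable (ξ i))
    (hindep : iIndepFun ξ ℙ)
    (hdist : ∀ i, Measure.map (ξ i) ℙ = ν)
    (n : ℕ) (F : ((↥(Finset.range n) → ℤ) × ℤ) → ℝ) (c : ℝ)
    (hF : ∀ p, |F p| ≤ c) :
    ∫ ω, F (fun i => ξ i ω, ξ n ω) ∂ℙ
      = ∫ v, ∫ y, F (v, y) ∂ν ∂(Measure.map (fun ω (i : ↥(Finset.range n)) => ξ i ω) ℙ) := by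
  set X : Ω → (↥(Finset.range n) → ℤ) := fun ω i => ξ i ω with hXdef
  have hX : Measurable X := measurable_pi_lambda _ fun i => hmeas i
  have hY : Measurable (ξ n) := hmeas n
  have hind : IndepFun X (ξ n) ℙ := by
    have hind0 := hindep.indepFun_finset (Finset.range n) {n} (by simp) hmeas
    have h2 := hind0.comp (measurable_id)
      (measurable_pi_apply (⟨n, Finset.mem_singleton_self n⟩ : ({n} : Finset ℕ)))
    exact h2
  have hmap : Measure.map (fun ω => (X ω, ξ n ω)) ℙ = (Measure.map X ℙ).prod ν := by
    rw [← hdist n]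
    exact (indepFun_iff_map_prod_eq_prod_map_map hX.aemeasurable hY.aemeasurable).mp hind
  have hFm : Measurable F := measurable_of_countable F
  haveI : IsProbabilityMeasure (Measure.map X ℙ) := Measure.isProbabilityMeasure_map hX.aemeasurable
  have hFint : Integrable F ((Measure.map X ℙ).prod ν) := my_int hFm.aestronglyMeasurable c hF
  calc ∫ ω, F (X ω, ξ n ω) ∂ℙ
      = ∫ p, F p ∂(Measure.map (fun ω => (X ω, ξ n ω)) ℙ) :=
        (integral_map (hX.prodMk hY).aemeasurable hFm.aestronglyMeasurable).symm
    _ = ∫ p, F p ∂((Measure.map X ℙ).prod ν) := by rw [hmap]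
    _ = ∫ v, ∫ y, F (v, y) ∂ν ∂(Measure.map X ℙ) := integral_prod F hFint

lemma my_abs_int {α : Type*} [MeasurableSpace α] (μ : Measure α) [IsProbabilityMeasure μ]
    (f : α → ℝ) (c : ℝ) (h : ∀ x, |f x| ≤ c) : |∫ x, f x ∂μ| ≤ c := by
  have h1 : ‖∫ x, f x ∂μ‖ ≤ c * (μ Set.univ).toReal :=
    norm_integral_le_of_norm_le_const
      (Filter.Eventually.of_forall (fun x => by simpa [Real.norm_eq_abs] using h x))
  simpa [Real.norm_eq_abs, measure_univ] using h1

lemma int_pospart (ν : Measure ℤ) [IsProbabilityMeasure ν]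
    (hint : Integrable (fun x : ℤ => (x : ℝ)) ν) (b : ℝ) :
    Integrable (fun y : ℤ => max ((y : ℝ) - b) 0) ν := by
  have h := (hint.sub (integrable_const b)).pos_part
  simpa using h


lemma drift (ν : Measure ℤ) [IsProbabilityMeasure ν]
    (hsupp : ν {k : ℤ | k < -1} = 0)
    (hint : Integrable (fun x : ℤ => (x : ℝ)) ν)
    (hmean : ∫ x : ℤ, (x : ℝ) ∂ν = 0)
    (l m : ℕ) (hl : 1 ≤ l) (hm : 2 ≤ m)
    (x : ℤ) (hx : x ∈ Set.Ioo (-(l : ℤ)) ((m : ℤ) - 1)) :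
    ∫ y : ℤ, hfun l m (x + y) ∂ν ≤ hfun l m x - dconst ν l m := by
  obtain ⟨hx1, hx2⟩ := hx
  have hl1 : (1 : ℝ) ≤ (l : ℝ) := by exact_mod_cast hl
  have hm2 : (2 : ℝ) ≤ (m : ℝ) := by exact_mod_cast hm
  have hx1R : -(l : ℝ) < (x : ℝ) := by exact_mod_cast hx1
  have hx2R : (x : ℝ) < (m : ℝ) - 1 := by exact_mod_cast hx2
  have hx1R' : -(l : ℝ) + 1 ≤ (x : ℝ) := by
    have : (-(l:ℤ) + 1 : ℤ) ≤ x := by omega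
    exact_mod_cast this
  set b : ℝ := ((m : ℝ) - 1) - (x : ℝ) with hb
  have hae : ∀ᵐ y ∂ν, (-1 : ℤ) ≤ y := by
    rw [ae_iff]
    convert hsupp using 2
    ext y
    simp [not_le]
  -- pointwise identity on {y ≥ -1}
  have key : ∀ᵐ y ∂ν, hfun l m (x + y)
      = ((l : ℝ) + (x : ℝ)) + ((y : ℝ) - max ((y : ℝ) - b) 0) := by
    filter_upwards [hae] with y hy
    have hyR : (-1 : ℝ) ≤ (y : ℝ) := by exact_mod_cast hy
    have hcast : ((x + y : ℤ) : ℝ) = (x : ℝ) + (y : ℝ) := by push_cast; ring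
    unfold hfun
    rw [hcast]
    rcases le_total ((x : ℝ) + (y : ℝ)) ((m : ℝ) - 1) with hc | hc
    · rw [min_eq_left hc, max_eq_right, max_eq_right] <;> nlinarith
    · rw [min_eq_right hc, max_eq_right, max_eq_left] <;> nlinarith
  have Ib : Integrable (fun y : ℤ => max ((y : ℝ) - b) 0) ν := int_pospart ν hint b
  have Ib0 : Integrable (fun y : ℤ => max ((y : ℝ) - ((m : ℝ) + (l : ℝ) - 2)) 0) ν :=
    int_pospart ν hint _
  have Isub : Integrable (fun y : ℤ => (y : ℝ) - max ((y : ℝ) - b) 0) ν := by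
    have := hint.sub Ib
    simpa [Pi.sub_def] using this
  rw [integral_congr_ae key]
  have expand : ∫ y : ℤ, (((l : ℝ) + (x : ℝ)) + ((y : ℝ) - max ((y : ℝ) - b) 0)) ∂ν
      = ((l : ℝ) + (x : ℝ)) + ((∫ y : ℤ, (y : ℝ) ∂ν) - ∫ y : ℤ, max ((y : ℝ) - b) 0 ∂ν) := by
    rw [integral_add (integrable_const _) Isub, integral_const,
      integral_sub hint Ib]
    simp
  rw [expand, hmean]
  have hmono : dconst ν l m ≤ ∫ y : ℤ, max ((y : ℝ) - b) 0 ∂ν := by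
    apply integral_mono Ib0 Ib
    intro y
    apply max_le_max _ le_rfl
    have : b ≤ (m : ℝ) + (l : ℝ) - 2 := by simp only [hb]; linarith
    linarith
  have hfx : hfun l m x = (l : ℝ) + (x : ℝ) := by
    unfold hfun
    rw [min_eq_left (le_of_lt hx2R), max_eq_right] ; linarith
  rw [hfx]
  linarith

lemma dconst_ge (ν : Measure ℤ) [IsProbabilityMeasure ν]
    (hint : Integrable (fun x : ℤ => (x : ℝ)) ν)
    (l m n₁ : ℕ) (hn₁ : (n₁ : ℝ) = 2 * m + l - 2) :
    (m : ℝ) * (ν {j : ℤ | (n₁ : ℤ) ≤ j}).toReal ≤ dconst ν l m := by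
  classical
  have hmeass : MeasurableSet {j : ℤ | (n₁ : ℤ) ≤ j} := trivial
  have hIint : Integrable ({j : ℤ | (n₁ : ℤ) ≤ j}.indicator (fun _ => (m : ℝ))) ν :=
    (integrable_const _).indicator hmeass
  have hpt : ∀ y : ℤ, {j : ℤ | (n₁ : ℤ) ≤ j}.indicator (fun _ => (m : ℝ)) y
      ≤ max ((y : ℝ) - ((m : ℝ) + (l : ℝ) - 2)) 0 := by
    intro y
    by_cases hy : y ∈ {j : ℤ | (n₁ : ℤ) ≤ j}
    · rw [Set.indicator_of_mem hy]
      have hyR : (n₁ : ℝ) ≤ (y : ℝ) := by exact_mod_cast hy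
      apply le_max_of_le_left
      rw [hn₁] at hyR
      linarith
    · rw [Set.indicator_of_notMem hy]
      exact le_max_right _ _
  have := integral_mono hIint (int_pospart ν hint _) hpt
  rwa [integral_indicator_const _ hmeass, smul_eq_mul, mul_comm] at this

lemma core {Ω : Type} [MeasureSpace Ω] [IsProbabilityMeasure (ℙ : Measure Ω)]
    (ν : Measure ℤ) [IsProbabilityMeasure ν]
    (hsupp : ν {k : ℤ | k < -1} = 0)
    (hint : Integrable (fun x : ℤ => (x : ℝ)) ν)
    (hmean : ∫ x : ℤ, (x : ℝ) ∂ν = 0)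
    (ξ : ℕ → Ω → ℤ) (hmeas : ∀ i, Measurable (ξ i))
    (hindep : iIndepFun ξ ℙ)
    (hdist : ∀ i, Measure.map (ξ i) ℙ = ν)
    (S : ℕ → Ω → ℤ) (hS : ∀ n ω, S n ω = ∑ i ∈ Finset.range n, ξ i ω)
    (k l m : ℕ) (hl : 1 ≤ l) (hm : 2 ≤ m) (hk : 1 ≤ k)
    (hδ : 0 < dconst ν l m) :
    (ℙ {ω | ∀ j ≤ k, -(l : ℤ) < S j ω}).toReal
      ≤ (l : ℝ) / m + (l : ℝ) / (dconst ν l m * k) := by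
  classical
  set δ : ℝ := dconst ν l m with hδdef
  have hl1 : (1 : ℝ) ≤ (l : ℝ) := by exact_mod_cast hl
  have hm2 : (2 : ℝ) ≤ (m : ℝ) := by exact_mod_cast hm
  set B : Set ℤ := Set.Ioo (-(l : ℤ)) ((m : ℤ) - 1) with hBdef
  set G : ℕ → Set Ω := fun n => {ω | ∀ j ≤ n, S j ω ∈ B} with hGdef
  set E : ℕ → Set Ω := fun n => G n ∩ {ω | (m : ℤ) - 1 ≤ S (n + 1) ω} with hEdef
  have hSmeas : ∀ n, Measurable (S n) := by
    intro n
    have : S n = fun ω => ∑ i ∈ Finset.range n, ξ i ω := funext (hS n)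
    rw [this]
    exact Finset.measurable_sum _ (fun i _ => hmeas i)
  have hGmeas : ∀ n, MeasurableSet (G n) := by
    intro n
    have : G n = ⋂ j, ⋂ _ : j ≤ n, (S j) ⁻¹' B := by
      ext ω; simp [hGdef, Set.mem_iInter]
    rw [this]
    exact MeasurableSet.iInter fun j => MeasurableSet.iInter fun _ => hSmeas j trivial
  have hEmeas : ∀ n, MeasurableSet (E n) := by
    intro n
    refine (hGmeas n).inter ?_
    have ht : MeasurableSet {z : ℤ | (m : ℤ) - 1 ≤ z} := trivial
    exact hSmeas (n + 1) ht
  have hGanti : ∀ {i j : ℕ}, i ≤ j → G j ⊆ G i :=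
    fun hij ω hω j hj => hω j (hj.trans hij)
  -- abbreviations
  set a : ℕ → ℝ := fun n => ∫ ω, (G n).indicator (fun ω => hfun l m (S n ω)) ω ∂ℙ with hadef
  set p : ℕ → ℝ := fun n => (ℙ (G n)).toReal with hpdef
  set e : ℕ → ℝ := fun n => (ℙ (E n)).toReal with hedef
  have hcb : (0:ℝ) ≤ (l : ℝ) + m - 1 := by linarith
  have hind_abs : ∀ (s : Set Ω) (j : ℕ) (ω : Ω),
      |s.indicator (fun ω => hfun l m (S j ω)) ω| ≤ (l : ℝ) + m - 1 := by
    intro s j ω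
    by_cases hω : ω ∈ s
    · rw [Set.indicator_of_mem hω]; exact hfun_abs_le l m hl hm _
    · rw [Set.indicator_of_notMem hω]; simpa using hcb
  have hind_int : ∀ (s : Set Ω) (_ : MeasurableSet s) (j : ℕ),
      Integrable (s.indicator (fun ω => hfun l m (S j ω))) ℙ := by
    intro s hs j
    have hm1 : Measurable (fun ω => hfun l m (S j ω)) :=
      (measurable_of_countable (hfun l m)).comp (hSmeas j)
    exact my_int (hm1.indicator hs).aestronglyMeasurable _ (hind_abs s j)
  -- Step A : one-step supermartingale inequality
  have stepA : ∀ n, ∫ ω, (G n).indicator (fun ω => hfun l m (S (n + 1) ω)) ω ∂ℙ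
      ≤ a n - δ * p n := by
    intro n
    set X : Ω → (↥(Finset.range n) → ℤ) := fun ω i => ξ i ω with hXdef
    have hX : Measurable X := measurable_pi_lambda _ fun i => hmeas i
    set pref : (↥(Finset.range n) → ℤ) → ℕ → ℤ :=
      fun v j => ∑ i : ↥(Finset.range n), if (i : ℕ) < j then v i else 0 with hprefdef
    have hpref : ∀ ω, ∀ j ≤ n, S j ω = pref (X ω) j := by
      intro ω j hj
      have hfil : (Finset.range n).filter (fun i => i < j) = Finset.range j := by
        ext i; simp only [Finset.mem_filter, Finset.mem_range]; omega
      calc S j ω = ∑ i ∈ Finset.range j, ξ i ω := hS j ω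
        _ = ∑ i ∈ (Finset.range n).filter (fun i => i < j), ξ i ω := by rw [hfil]
        _ = ∑ i ∈ Finset.range n, if i < j then ξ i ω else 0 := by
            rw [Finset.sum_filter]
        _ = pref (X ω) j := (Finset.sum_coe_sort _ _).symm
    have hSn1 : ∀ ω, S (n + 1) ω = pref (X ω) n + ξ n ω := by
      intro ω
      rw [hS (n + 1) ω, Finset.sum_range_succ, ← hS n ω, hpref ω n le_rfl]
    set Gv : (↥(Finset.range n) → ℤ) → Prop := fun v => ∀ j ≤ n, pref v j ∈ B with hGvdef
    have hGiff : ∀ ω, ω ∈ G n ↔ Gv (X ω) := by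
      intro ω
      constructor
      · intro h j hj; rw [← hpref ω j hj]; exact h j hj
      · intro h j hj; rw [hpref ω j hj]; exact h j hj
    set F : ((↥(Finset.range n) → ℤ) × ℤ) → ℝ :=
      fun q => if Gv q.1 then hfun l m (pref q.1 n + q.2) else 0 with hFdef
    have hFbd : ∀ q, |F q| ≤ (l : ℝ) + m - 1 := by
      intro q
      by_cases h : Gv q.1
      · simp only [hFdef, if_pos h]; exact hfun_abs_le l m hl hm _
      · simp only [hFdef, if_neg h]; simpa using hcb
    have h1 : ∫ ω, (G n).indicator (fun ω => hfun l m (S (n + 1) ω)) ω ∂ℙ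
        = ∫ ω, F (X ω, ξ n ω) ∂ℙ := by
      refine integral_congr_ae (Filter.Eventually.of_forall fun ω => ?_)
      by_cases hω : ω ∈ G n
      · rw [Set.indicator_of_mem hω]
        simp only [hFdef]
        rw [if_pos ((hGiff ω).mp hω), ← hSn1 ω]
      · rw [Set.indicator_of_notMem hω]
        simp only [hFdef]
        rw [if_neg (fun h => hω ((hGiff ω).mpr h))]
    rw [h1, exp_prefix_step ν ξ hmeas hindep hdist n F _ hFbd]
    haveI : IsProbabilityMeasure (Measure.map X ℙ) := Measure.isProbabilityMeasure_map hX.aemeasurable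
    have int1 : Integrable (fun v => ∫ y, F (v, y) ∂ν) (Measure.map X ℙ) := by
      refine my_int (measurable_of_countable _).aestronglyMeasurable ((l : ℝ) + m - 1) ?_
      intro v
      exact my_abs_int ν _ _ (fun y => hFbd (v, y))
    have int2 : Integrable (fun v => if Gv v then hfun l m (pref v n) - δ else 0)
        (Measure.map X ℙ) := by
      refine my_int (measurable_of_countable _).aestronglyMeasurable ((l : ℝ) + m - 1 + |δ|) ?_
      intro v
      by_cases h : Gv v
      · simp only [if_pos h]
        calc |hfun l m (pref v n) - δ| ≤ |hfun l m (pref v n)| + |δ| := abs_sub _ _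
          _ ≤ (l : ℝ) + m - 1 + |δ| := by
              have := hfun_abs_le l m hl hm (pref v n); linarith
      · simp only [if_neg h, abs_zero]; positivity
    have hmono : ∫ v, ∫ y, F (v, y) ∂ν ∂(Measure.map X ℙ)
        ≤ ∫ v, (if Gv v then hfun l m (pref v n) - δ else 0) ∂(Measure.map X ℙ) := by
      refine integral_mono int1 int2 fun v => ?_
      by_cases h : Gv v
      · simp only [hFdef, if_pos h]
        exact drift ν hsupp hint hmean l m hl hm (pref v n) (h n le_rfl)
      · simp only [hFdef, if_neg h, integral_zero]
        exact le_refl 0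
    refine hmono.trans ?_
    have h2 : ∫ v, (if Gv v then hfun l m (pref v n) - δ else 0) ∂(Measure.map X ℙ)
        = ∫ ω, (if Gv (X ω) then hfun l m (pref (X ω) n) - δ else 0) ∂ℙ :=
      integral_map hX.aemeasurable (measurable_of_countable _).aestronglyMeasurable
    rw [h2]
    have h3 : ∫ ω, (if Gv (X ω) then hfun l m (pref (X ω) n) - δ else 0) ∂ℙ
        = ∫ ω, ((G n).indicator (fun ω => hfun l m (S n ω)) ω
            - (G n).indicator (fun _ => δ) ω) ∂ℙ := by
      refine integral_congr_ae (Filter.Eventually.of_forall fun ω => ?_)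
      show (if Gv (X ω) then hfun l m (pref (X ω) n) - δ else 0)
          = (G n).indicator (fun ω => hfun l m (S n ω)) ω - (G n).indicator (fun _ => δ) ω
      by_cases hω : ω ∈ G n
      · rw [if_pos ((hGiff ω).mp hω), Set.indicator_of_mem hω, Set.indicator_of_mem hω,
          ← hpref ω n le_rfl]
      · rw [if_neg (fun h => hω ((hGiff ω).mpr h)), Set.indicator_of_notMem hω,
          Set.indicator_of_notMem hω, sub_zero]
    rw [h3, integral_sub (hind_int (G n) (hGmeas n) n)
      ((integrable_const δ).indicator (hGmeas n)),
      integral_indicator_const δ (hGmeas n), smul_eq_mul, mul_comm]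
    exact le_rfl
  -- Step B
  have stepB : ∀ n, a (n + 1) + ((l : ℝ) + m - 1) * e n
      ≤ ∫ ω, (G n).indicator (fun ω => hfun l m (S (n + 1) ω)) ω ∂ℙ := by
    intro n
    have I1 := hind_int (G (n + 1)) (hGmeas (n + 1)) (n + 1)
    have I2 : Integrable ((E n).indicator (fun _ => (l : ℝ) + m - 1)) ℙ :=
      (integrable_const _).indicator (hEmeas n)
    have heq : a (n + 1) + ((l : ℝ) + m - 1) * e n
        = ∫ ω, ((G (n + 1)).indicator (fun ω => hfun l m (S (n + 1) ω)) ω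
            + (E n).indicator (fun _ => (l : ℝ) + m - 1) ω) ∂ℙ := by
      rw [integral_add I1 I2, integral_indicator_const _ (hEmeas n), smul_eq_mul, mul_comm]
      rfl
    rw [heq]
    refine integral_mono (I1.add I2) (hind_int (G n) (hGmeas n) (n + 1)) fun ω => ?_
    by_cases hg1 : ω ∈ G (n + 1)
    · have hgn : ω ∈ G n := hGanti (Nat.le_succ n) hg1
      have hne : ω ∉ E n := by
        intro he
        have h1 : S (n + 1) ω ∈ B := hg1 (n + 1) le_rfl
        have h2 : (m : ℤ) - 1 ≤ S (n + 1) ω := he.2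
        rw [hBdef] at h1
        exact absurd h2 (not_le.mpr h1.2)
      rw [Set.indicator_of_mem hg1, Set.indicator_of_notMem hne,
        Set.indicator_of_mem hgn, add_zero]
    · rw [Set.indicator_of_notMem hg1]
      by_cases hgn : ω ∈ G n
      · rw [Set.indicator_of_mem hgn]
        by_cases he : ω ∈ E n
        · rw [Set.indicator_of_mem he, zero_add, hfun_up l m hl hm _ he.2]
        · rw [Set.indicator_of_notMem he, add_zero]
          exact hfun_nonneg l m _
      · have hne : ω ∉ E n := fun he => hgn he.1
        rw [Set.indicator_of_notMem hne, Set.indicator_of_notMem hgn, add_zero]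
  have step : ∀ n, a (n + 1) + ((l : ℝ) + m - 1) * e n + δ * p n ≤ a n := by
    intro n
    have := stepA n
    have := stepB n
    linarith
  -- telescoping
  have telescope : ∀ N, a N + ((l : ℝ) + m - 1) * ∑ n ∈ Finset.range N, e n
      + δ * ∑ n ∈ Finset.range N, p n ≤ a 0 := by
    intro N
    induction N with
    | zero => simp
    | succ N ih =>
        have := step N
        rw [Finset.sum_range_succ, Finset.sum_range_succ]
        nlinarith [this, ih]
  -- a 0 = l
  have hG0 : G 0 = Set.univ := by
    ext ω
    simp only [hGdef, Set.mem_setOf_eq, Set.mem_univ, iff_true, Nat.le_zero]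
    intro j hj
    subst hj
    have : S 0 ω = 0 := by rw [hS]; simp
    rw [this, hBdef]
    constructor
    · omega
    · omega
  have ha0 : a 0 = (l : ℝ) := by
    have : ∀ ω : Ω, (G 0).indicator (fun ω => hfun l m (S 0 ω)) ω = (l : ℝ) := by
      intro ω
      rw [hG0, Set.indicator_univ]
      have : S 0 ω = 0 := by rw [hS]; simp
      rw [this, hfun_zero l m hm]
    rw [hadef]
    simp only [this]
    simp
  have hak : 0 ≤ a k :=
    integral_nonneg fun ω => Set.indicator_nonneg (fun ω _ => hfun_nonneg l m _) ω
  have he_nonneg : ∀ n, 0 ≤ e n := fun n => ENNReal.toReal_nonneg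
  have hp_nonneg : ∀ n, 0 ≤ p n := fun n => ENNReal.toReal_nonneg
  have hsum_e_nonneg : 0 ≤ ∑ n ∈ Finset.range k, e n :=
    Finset.sum_nonneg fun n _ => he_nonneg n
  have hsum_p_nonneg : 0 ≤ ∑ n ∈ Finset.range k, p n :=
    Finset.sum_nonneg fun n _ => hp_nonneg n
  have hmain := telescope k
  rw [ha0] at hmain
  -- bound on sum of e
  have hEbound : ∑ n ∈ Finset.range k, e n ≤ (l : ℝ) / ((l : ℝ) + m - 1) := by
    rw [le_div_iff₀ (by linarith)]
    nlinarith [hmain, hak, hsum_p_nonneg, hδ]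
  -- bound on p k
  have hpk : p k ≤ (l : ℝ) / (δ * k) := by
    have h1 : ∀ n ∈ Finset.range k, p k ≤ p n := by
      intro n hn
      have : G k ⊆ G n := hGanti (le_of_lt (Finset.mem_range.mp hn))
      exact ENNReal.toReal_mono (measure_ne_top _ _) (measure_mono this)
    have h2 : (k : ℝ) * p k ≤ ∑ n ∈ Finset.range k, p n := by
      calc (k : ℝ) * p k = ∑ _n ∈ Finset.range k, p k := by
            rw [Finset.sum_const, Finset.card_range, nsmul_eq_mul]
        _ ≤ ∑ n ∈ Finset.range k, p n := Finset.sum_le_sum h1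
    have hδk : (0 : ℝ) < δ * k := by
      have : (0:ℝ) < (k : ℝ) := by exact_mod_cast hk
      positivity
    rw [le_div_iff₀ hδk]
    nlinarith [hmain, hak, hsum_e_nonneg, hcb, hsum_e_nonneg]
  -- inclusion
  have hincl : {ω | ∀ j ≤ k, -(l : ℤ) < S j ω} ⊆ G k ∪ ⋃ n ∈ Finset.range k, E n := by
    intro ω hω
    by_cases hGk : ω ∈ G k
    · exact Or.inl hGk
    · right
      have hexists : ∃ j, j ≤ k ∧ S j ω ∉ B := by
        by_contra hcon
        push_neg at hcon
        exact hGk fun j hj => hcon j hj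
      have hfind := Nat.find_spec hexists
      set j₁ := Nat.find hexists with hj₁def
      have hmin : ∀ i < j₁, ¬(i ≤ k ∧ S i ω ∉ B) := fun i hi => Nat.find_min _ hi
      have hj₁pos : j₁ ≠ 0 := by
        intro h0
        have : S 0 ω = 0 := by rw [hS]; simp
        apply hfind.2
        rw [h0, this, hBdef]
        constructor <;> omega
      obtain ⟨n, hn⟩ := Nat.exists_eq_succ_of_ne_zero hj₁pos
      have hnk : n < k := by omega
      refine Set.mem_biUnion (Finset.mem_range.mpr hnk) ?_
      constructor
      · intro j hj
        by_contra hB'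
        exact hmin j (by omega) ⟨by omega, hB'⟩
      · have h1 : S (n + 1) ω ∉ B := by
          have hEq : n + 1 = j₁ := by omega
          rw [hEq]; exact hfind.2
        have h2 : -(l : ℤ) < S (n + 1) ω := hω (n + 1) (by omega)
        rw [hBdef] at h1
        simp only [Set.mem_Ioo, not_and, not_lt] at h1
        exact h1 h2
  -- measure bound
  have hmeasT : (ℙ {ω | ∀ j ≤ k, -(l : ℤ) < S j ω}).toReal ≤ p k + ∑ n ∈ Finset.range k, e n := by
    have hb1 : ℙ {ω | ∀ j ≤ k, -(l : ℤ) < S j ω}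
        ≤ ℙ (G k) + ∑ n ∈ Finset.range k, ℙ (E n) := by
      refine (measure_mono hincl).trans ?_
      refine (measure_union_le _ _).trans ?_
      exact add_le_add le_rfl (measure_biUnion_finset_le _ _)
    have hne : ℙ (G k) + ∑ n ∈ Finset.range k, ℙ (E n) ≠ ⊤ := by
      apply ENNReal.add_ne_top.mpr
      constructor
      · exact measure_ne_top _ _
      · exact (ENNReal.sum_lt_top.mpr fun n _ => measure_lt_top _ _).ne
    have := ENNReal.toReal_mono hne hb1
    rw [ENNReal.toReal_add (measure_ne_top _ _)
      (ENNReal.sum_lt_top.mpr fun n _ => measure_lt_top _ _).ne, ENNReal.toReal_sum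
      (fun n _ => measure_ne_top _ _)] at this
    exact this
  refine hmeasT.trans ?_
  have h4 : (l : ℝ) / ((l : ℝ) + m - 1) ≤ (l : ℝ) / m := by
    apply div_le_div_of_nonneg_left (by linarith) (by linarith) (by linarith)
  linarith

/-- There is a finite constant `K` such that for all `k, ℓ ≥ 1`,
`ℙ(J_k > -ℓ) ≤ K · ℓ · k^{-1/α}`, where `J_k = min_{0 ≤ j ≤ k} S_j`. -/
theorem stmt_17
    (α : ℝ) (hα₁ : 1 < α) (hα₂ : α < 2)
    (Ω : Type) [MeasureSpace Ω] [IsProbabilityMeasure (ℙ : Measure Ω)]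
    (ν : Measure ℤ) [IsProbabilityMeasure ν]
    (hsupp : ν {k : ℤ | k < -1} = 0)
    (hint : Integrable (fun x : ℤ => (x : ℝ)) ν)
    (hmean : ∫ x : ℤ, (x : ℝ) ∂ν = 0)
    (C : ℝ) (hC : 0 < C)
    (htail : Tendsto (fun k : ℕ => (k : ℝ) ^ α * (ν {j : ℤ | (k : ℤ) ≤ j}).toReal)
      atTop (nhds C))
    (ξ : ℕ → Ω → ℤ) (hmeas : ∀ i, Measurable (ξ i))
    (hindep : iIndepFun ξ ℙ)
    (hdist : ∀ i, Measure.map (ξ i) ℙ = ν)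
    (S : ℕ → Ω → ℤ) (hS : ∀ n ω, S n ω = ∑ i ∈ Finset.range n, ξ i ω)
    (J : ℕ → Ω → ℤ)
    (hJ : ∀ n ω, J n ω = (Finset.range (n + 1)).inf' (by simp) (fun k => S k ω)) :
    ∃ K : ℝ, ∀ k : ℕ, 1 ≤ k → ∀ l : ℕ, 1 ≤ l →
      ℙ {ω | -(l : ℤ) < J k ω} ≤ ENNReal.ofReal (K * (l : ℝ) * (k : ℝ) ^ (-(1 / α))) := by
  have hα0 : 0 < α := by linarith
  -- tail lower bound threshold
  obtain ⟨k₀', hk₀'⟩ := (htail.eventually (eventually_ge_nhds (by linarith : C / 2 < C))).exists_forall_of_atTop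
  set k₀ : ℕ := max k₀' 1 with hk₀def
  have hk₀1 : 1 ≤ k₀ := le_max_right _ _
  have htail_low : ∀ n : ℕ, k₀ ≤ n → C / 2 ≤ (n : ℝ) ^ α * (ν {j : ℤ | (n : ℤ) ≤ j}).toReal :=
    fun n hn => hk₀' n (le_trans (le_max_left _ _) hn)
  -- the constant
  set c₂ : ℝ := (C / 2) * (3 : ℝ) ^ (-α) * ((k₀ : ℝ) + 4) ^ (1 - α) with hc₂def
  have hc₂ : 0 < c₂ := by
    apply mul_pos (mul_pos (by linarith) _)
    · exact Real.rpow_pos_of_pos (by positivity) _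
    · exact Real.rpow_pos_of_pos (by positivity) _
  refine ⟨1 + 1 / c₂, ?_⟩
  intro k hk l hl
  -- basic casts
  have hk1R : (1 : ℝ) ≤ (k : ℝ) := by exact_mod_cast hk
  have hkpos : (0 : ℝ) < (k : ℝ) := by linarith
  have hl1R : (1 : ℝ) ≤ (l : ℝ) := by exact_mod_cast hl
  have hα0' : α ≠ 0 := ne_of_gt hα0
  set q : ℝ := (k : ℝ) ^ (1 / α) with hqdef
  have hq1 : 1 ≤ q := by
    have := Real.rpow_le_rpow_of_exponent_le hk1R (le_of_lt (by positivity : (0:ℝ) < 1 / α))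
    rwa [Real.rpow_zero] at this
  have hq0 : 0 < q := by linarith
  have hkneg : (k : ℝ) ^ (-(1 / α)) = q⁻¹ := Real.rpow_neg hkpos.le (1 / α)
  have hc₂inv : 0 < 1 / c₂ := by positivity
  -- the set identity
  have hset : {ω | -(l : ℤ) < J k ω} = {ω | ∀ j ≤ k, -(l : ℤ) < S j ω} := by
    ext ω
    simp only [Set.mem_setOf_eq, hJ k ω, Finset.lt_inf'_iff, Finset.mem_range, Nat.lt_succ_iff]
  rw [hset]
  by_cases hcase : q ≤ (l : ℝ)
  · -- trivial regime
    calc ℙ {ω | ∀ j ≤ k, -(l : ℤ) < S j ω} ≤ 1 := prob_le_one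
      _ = ENNReal.ofReal 1 := by rw [ENNReal.ofReal_one]
      _ ≤ ENNReal.ofReal ((1 + 1 / c₂) * (l : ℝ) * (k : ℝ) ^ (-(1 / α))) := by
          apply ENNReal.ofReal_le_ofReal
          rw [hkneg]
          have h1 : 1 ≤ (l : ℝ) * q⁻¹ := by
            rw [← div_eq_mul_inv, le_div_iff₀ hq0]
            linarith
          calc (1:ℝ) ≤ (l : ℝ) * q⁻¹ := h1
            _ ≤ (1 + 1 / c₂) * ((l : ℝ) * q⁻¹) :=
                le_mul_of_one_le_left (by positivity) (by linarith)
            _ = (1 + 1 / c₂) * (l : ℝ) * q⁻¹ := by ring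
  · push_neg at hcase  -- (l : ℝ) < q
    set m : ℕ := k₀ + 2 + ⌈q⌉₊ with hmdef
    have hm2 : 2 ≤ m := by omega
    have hm0R : (0:ℝ) < (m:ℝ) := by
      have : (0:ℕ) < m := by omega
      exact_mod_cast this
    have hmq : q ≤ (m : ℝ) := by
      have h1 : q ≤ (⌈q⌉₊ : ℝ) := Nat.le_ceil q
      have h2 : ((⌈q⌉₊ : ℕ) : ℝ) ≤ (m : ℝ) := by
        have : ⌈q⌉₊ ≤ m := by omega
        exact_mod_cast this
      linarith
    have hmub : (m : ℝ) ≤ ((k₀ : ℝ) + 4) * q := by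
      have h1 : ((⌈q⌉₊ : ℕ) : ℝ) ≤ q + 1 := le_of_lt (Nat.ceil_lt_add_one (by linarith))
      have h2 : (m : ℝ) = (k₀ : ℝ) + 2 + ((⌈q⌉₊ : ℕ) : ℝ) := by
        rw [hmdef]; push_cast; ring
      have h3 : (1:ℝ) ≤ (k₀ : ℝ) := by exact_mod_cast hk₀1
      nlinarith
    set n₁ : ℕ := 2 * m + l - 2 with hn₁def
    have h2n : 2 ≤ 2 * m + l := by omega
    have hn₁R : (n₁ : ℝ) = 2 * (m:ℝ) + (l:ℝ) - 2 := by
      rw [hn₁def]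
      push_cast [Nat.cast_sub h2n]
      ring
    have hn₁k₀ : k₀ ≤ n₁ := by omega
    have hn₁pos : (0:ℝ) < (n₁:ℝ) := by
      have : 0 < n₁ := by omega
      exact_mod_cast this
    -- tail lower bound at n₁
    have hpow : (0:ℝ) < (n₁:ℝ) ^ α := Real.rpow_pos_of_pos hn₁pos α
    have htl : C / 2 * (((n₁:ℝ) ^ α)⁻¹) ≤ (ν {j : ℤ | (n₁ : ℤ) ≤ j}).toReal := by
      have h := htail_low n₁ hn₁k₀
      rw [← div_eq_mul_inv, div_le_iff₀ hpow]
      calc C / 2 ≤ (n₁:ℝ) ^ α * (ν {j : ℤ | (n₁ : ℤ) ≤ j}).toReal := h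
        _ = (ν {j : ℤ | (n₁ : ℤ) ≤ j}).toReal * (n₁:ℝ) ^ α := mul_comm _ _
    -- lower bound on dconst
    have hn₁le : (n₁:ℝ) ≤ 3 * (m:ℝ) := by rw [hn₁R]; linarith
    have hinv : (((3 * (m:ℝ)) ^ α)⁻¹) ≤ (((n₁:ℝ) ^ α)⁻¹) := by
      have h1 : (n₁:ℝ) ^ α ≤ (3 * (m:ℝ)) ^ α :=
        Real.rpow_le_rpow hn₁pos.le hn₁le hα0.le
      exact inv_anti₀ hpow h1
    have hδ2 : C / 2 * (3:ℝ) ^ (-α) * (m:ℝ) ^ (1 - α) ≤ dconst ν l m := by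
      have hd := dconst_ge ν hint l m n₁ hn₁R
      have h1 : (m:ℝ) * (C / 2 * (((3 * (m:ℝ)) ^ α)⁻¹))
          ≤ (m:ℝ) * (ν {j : ℤ | (n₁ : ℤ) ≤ j}).toReal := by
        apply mul_le_mul_of_nonneg_left _ hm0R.le
        calc C / 2 * (((3 * (m:ℝ)) ^ α)⁻¹) ≤ C / 2 * (((n₁:ℝ) ^ α)⁻¹) := by
              apply mul_le_mul_of_nonneg_left hinv (by linarith)
          _ ≤ _ := htl
      have h2 : (m:ℝ) * (C / 2 * (((3 * (m:ℝ)) ^ α)⁻¹))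
          = C / 2 * (3:ℝ) ^ (-α) * (m:ℝ) ^ (1 - α) := by
        rw [Real.mul_rpow (by norm_num : (0:ℝ) ≤ 3) hm0R.le,
          Real.rpow_neg (by norm_num : (0:ℝ) ≤ 3),
          Real.rpow_sub hm0R, Real.rpow_one]
        field_simp
      rw [← h2]
      exact le_trans h1 hd
    have hδpos : 0 < dconst ν l m := by
      refine lt_of_lt_of_le ?_ hδ2
      have := Real.rpow_pos_of_pos (by norm_num : (0:ℝ) < 3) (-α)
      have := Real.rpow_pos_of_pos hm0R (1 - α)
      positivity
    -- key: c₂ * q ≤ dconst * k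
    have hqk : q ^ (1 - α) * (k:ℝ) = q := by
      calc q ^ (1 - α) * (k:ℝ)
          = (k:ℝ) ^ (1 / α * (1 - α)) * (k:ℝ) ^ (1:ℝ) := by
            rw [hqdef, ← Real.rpow_mul hkpos.le, Real.rpow_one]
        _ = (k:ℝ) ^ (1 / α * (1 - α) + 1) := (Real.rpow_add hkpos _ _).symm
        _ = (k:ℝ) ^ (1 / α) := by
            congr 1
            field_simp
            ring
    have hmpow : ((k₀:ℝ) + 4) ^ (1 - α) * q ^ (1 - α) ≤ (m:ℝ) ^ (1 - α) := by
      rw [← Real.mul_rpow (by positivity) hq0.le]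
      exact Real.rpow_le_rpow_of_nonpos hm0R hmub (by linarith)
    have hkey : c₂ * q ≤ dconst ν l m * (k:ℝ) := by
      have h3 : (0:ℝ) < (3:ℝ) ^ (-α) := Real.rpow_pos_of_pos (by norm_num) _
      have e0 : c₂ * q = C / 2 * (3:ℝ) ^ (-α) * (((k₀:ℝ) + 4) ^ (1 - α) * q ^ (1 - α)) * (k:ℝ) := by
        rw [show C / 2 * (3:ℝ) ^ (-α) * (((k₀:ℝ) + 4) ^ (1 - α) * q ^ (1 - α)) * (k:ℝ)
            = C / 2 * (3:ℝ) ^ (-α) * ((k₀:ℝ) + 4) ^ (1 - α) * (q ^ (1 - α) * (k:ℝ)) from by ring,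
          hqk, hc₂def]
      calc c₂ * q = C / 2 * (3:ℝ) ^ (-α) * (((k₀:ℝ) + 4) ^ (1 - α) * q ^ (1 - α)) * (k:ℝ) := e0
        _ ≤ C / 2 * (3:ℝ) ^ (-α) * ((m:ℝ) ^ (1 - α)) * (k:ℝ) := by
            apply mul_le_mul_of_nonneg_right _ hkpos.le
            apply mul_le_mul_of_nonneg_left hmpow (by positivity)
        _ ≤ dconst ν l m * (k:ℝ) := mul_le_mul_of_nonneg_right hδ2 hkpos.le
    -- apply the core estimate
    have hcore := core ν hsupp hint hmean ξ hmeas hindep hdist S hS k l m hl hm2 hk hδpos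
    have hc₂q : (0:ℝ) < c₂ * q := by positivity
    have hfinal : (ℙ {ω | ∀ j ≤ k, -(l : ℤ) < S j ω}).toReal
        ≤ (1 + 1 / c₂) * (l:ℝ) * q⁻¹ := by
      have hb1 : (l:ℝ) / (m:ℝ) ≤ (l:ℝ) / q :=
        div_le_div_of_nonneg_left (by linarith) hq0 hmq
      have hb2 : (l:ℝ) / (dconst ν l m * (k:ℝ)) ≤ (l:ℝ) / (c₂ * q) :=
        div_le_div_of_nonneg_left (by linarith) hc₂q hkey
      have heq : (l:ℝ) / q + (l:ℝ) / (c₂ * q) = (1 + 1 / c₂) * (l:ℝ) * q⁻¹ := by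
        field_simp
      linarith [hcore]
    calc ℙ {ω | ∀ j ≤ k, -(l : ℤ) < S j ω}
        = ENNReal.ofReal ((ℙ {ω | ∀ j ≤ k, -(l : ℤ) < S j ω}).toReal) :=
          (ENNReal.ofReal_toReal (measure_ne_top _ _)).symm
      _ ≤ ENNReal.ofReal ((1 + 1 / c₂) * (l : ℝ) * (k : ℝ) ^ (-(1 / α))) := by
          apply ENNReal.ofReal_le_ofReal
          rw [hkneg]
          exact hfinal
end
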